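/- arXiv:math/0203268 — 5 statements merged into one kernel-verified Lean document; each statement's English description precedes it below -/
import Mathlib

section
/- The standard simplex T^d = {x ∈ ℝ^d : x_i ≥ 0 for all i, and x_1 + ⋯ + x_d ≤ 1} equals the set {x ∈ ℝ^d : x_i(1 - x_i - x_{i+1} - ⋯ - x_d) ≥ 0 for all 1 ≤ i ≤ d}, so the d-simplex is described by d polynomial inequalities. -/
/-- The standard simplex `T^d` equals the set described by the `d` polynomial
inequalities `x_i (1 - x_i - ⋯ - x_d) ≥ 0`. -/
theorem simplex_P_representation (d : ℕ) (hd : 1 ≤ d) :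
    {x : Fin d → ℝ | (∀ i, 0 ≤ x i) ∧ ∑ i, x i ≤ 1} =
      {x : Fin d → ℝ | ∀ i, 0 ≤ x i * (1 - ∑ j ∈ Finset.Ici i, x j)} := by
  ext x
  simp only [Set.mem_setOf_eq]
  constructor
  · rintro ⟨hpos, hsum⟩ i
    have h1 : ∑ j ∈ Finset.Ici i, x j ≤ ∑ j, x j := by
      apply Finset.sum_le_sum_of_subset_of_nonneg (Finset.subset_univ _)
      intro j _ _; exact hpos j
    have h2 : 0 ≤ 1 - ∑ j ∈ Finset.Ici i, x j := by linarith
    exact mul_nonneg (hpos i) h2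
  · intro h
    have key : ∀ n, ∀ i : Fin d, d - i.val ≤ n →
        0 ≤ x i ∧ ∑ j ∈ Finset.Ici i, x j ≤ 1 := by
      intro n
      induction n with
      | zero => intro i hi; have := i.isLt; omega
      | succ n ih =>
        intro i hi
        by_cases hlast : i.val + 1 < d
        · set i' : Fin d := ⟨i.val + 1, hlast⟩ with hi'def
          have hmem : i ∉ Finset.Ici i' := by
            rw [Finset.mem_Ici, Fin.le_def]; show ¬ (i.val + 1 ≤ i.val); omega
          have hsplit : Finset.Ici i = insert i (Finset.Ici i') := by
            ext j
            simp only [Finset.mem_Ici, Finset.mem_insert, Fin.le_def, Fin.ext_iff]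
            have : i'.val = i.val + 1 := rfl
            omega
          have hv : i'.val = i.val + 1 := rfl
          have hx' : ∀ j ∈ Finset.Ici i', 0 ≤ x j := by
            intro j hj
            have hj' : i'.val ≤ j.val := (Fin.le_def.mp (Finset.mem_Ici.mp hj))
            have := j.isLt
            exact (ih j (by omega)).1
          have hS0 : 0 ≤ ∑ j ∈ Finset.Ici i', x j := Finset.sum_nonneg hx'
          have hS1 : ∑ j ∈ Finset.Ici i', x j ≤ 1 := (ih i' (by omega)).2
          have hprod := h i
          rw [hsplit, Finset.sum_insert hmem] at hprod ⊢
          have hx : 0 ≤ x i := by nlinarith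
          constructor
          · exact hx
          · rcases eq_or_lt_of_le hx with heq | hlt
            · linarith [heq.symm]
            · nlinarith
        · have hsing : Finset.Ici i = {i} := by
            ext j
            have := j.isLt; have := i.isLt
            simp only [Finset.mem_Ici, Finset.mem_singleton, Fin.le_def, Fin.ext_iff]
            omega
          have hprod := h i
          rw [hsing, Finset.sum_singleton] at hprod ⊢
          constructor
          · nlinarith
          · nlinarith
    have hpos : ∀ i, 0 ≤ x i := fun i => (key d i (by omega)).1
    refine ⟨hpos, ?_⟩
    have h0 : Finset.Ici (⟨0, hd⟩ : Fin d) = Finset.univ := by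
      ext j; simp [Finset.mem_Ici, Fin.le_def]
    have := (key d ⟨0, hd⟩ (by omega)).2
    rwa [h0] at this
end

section
/- For any d-dimensional polytope P ⊂ ℝ^d, the minimal number m_P(P) of polynomials needed in a representation P = {x : p_1(x) ≥ 0, …, p_l(x) ≥ 0} satisfies m_P(P) ≥ d. -/
open MvPolynomial

open MvPolynomial in
lemma analytic_eval {n : ℕ} (p : MvPolynomial (Fin n) ℝ) :
    AnalyticOnNhd ℝ (fun x : Fin n → ℝ => eval x p) Set.univ := by
  induction p using MvPolynomial.induction_on with
  | C a => simpa using analyticOnNhd_const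
  | add p q hp hq => simp only [map_add]; exact hp.add hq
  | mul_X p i hp =>
      simp only [map_mul, eval_X]
      exact hp.mul ((ContinuousLinearMap.proj (R := ℝ) (φ := fun _ : Fin n => ℝ) i).analyticOnNhd _)

open MvPolynomial in
lemma eval_eq_zero_of_open {n : ℕ} (p : MvPolynomial (Fin n) ℝ) {W : Set (Fin n → ℝ)}
    (hW : IsOpen W) (hne : W.Nonempty) (hz : ∀ y ∈ W, eval y p = 0) (x : Fin n → ℝ) :
    eval x p = 0 := by
  obtain ⟨z, hzW⟩ := hne
  have h := (analytic_eval p).eqOn_zero_of_preconnected_of_eventuallyEq_zero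
    isPreconnected_univ (Set.mem_univ z)
    (Filter.eventuallyEq_of_mem (hW.mem_nhds hzW) hz)
  exact h (Set.mem_univ x)

open MvPolynomial in
lemma exists_poly_vanishes {n l : ℕ} (f : Fin l → MvPolynomial (Fin n) ℝ)
    {W : Set (Fin n → ℝ)} (hW : IsOpen W) (hne : W.Nonempty)
    (hcov : ∀ y ∈ W, ∃ j, eval y (f j) = 0) :
    ∃ j, ∀ y, eval y (f j) = 0 := by
  by_contra hc
  push_neg at hc
  have hdense : ∀ j, Dense {y : Fin n → ℝ | eval y (f j) ≠ 0} := by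
    intro j
    by_contra hd
    rw [dense_iff_inter_open] at hd
    push_neg at hd
    obtain ⟨V, hVo, hVne, hV⟩ := hd
    have : ∀ y ∈ V, eval y (f j) = 0 := by
      intro y hy
      by_contra h0
      exact (Set.eq_empty_iff_forall_notMem.1 hV y) ⟨hy, h0⟩
    obtain ⟨y, hy⟩ := hc j
    exact hy (eval_eq_zero_of_open (f j) hVo hVne this y)
  have hopen : ∀ j, IsOpen {y : Fin n → ℝ | eval y (f j) ≠ 0} := fun j =>
    isOpen_compl_iff.mpr (isClosed_eq (MvPolynomial.continuous_eval (f j)) continuous_const)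
  have hd := dense_iInter_of_isOpen hopen hdense
  obtain ⟨z, hzW⟩ := hne
  obtain ⟨y, hy, hyW⟩ := hd.exists_mem_open hW ⟨z, hzW⟩
  obtain ⟨j, hj⟩ := hcov y hyW
  exact (Set.mem_iInter.1 hy j) hj

lemma lin_continuous' {d : ℕ} (α : Fin d → ℝ) :
    Continuous fun x : Fin d → ℝ => ∑ j, α j * x j :=
  continuous_finset_sum _ fun j _ => continuous_const.mul (continuous_apply j)

lemma not_univ_compact {d : ℕ} {P : Set (Fin (d+1) → ℝ)} (hcomp : IsCompact P) :
    P ≠ Set.univ := by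
  intro h
  obtain ⟨C, hC⟩ := (hcomp.isBounded).exists_norm_le
  have h1 : ‖(fun _ => C + 1 : Fin (d+1) → ℝ)‖ ≤ C := hC _ (h ▸ Set.mem_univ _)
  have h2 : ‖(C + 1 : ℝ)‖ ≤ ‖(fun _ => C + 1 : Fin (d+1) → ℝ)‖ :=
    norm_le_pi_norm (fun _ => C + 1 : Fin (d+1) → ℝ) 0
  have := le_trans (le_abs_self (C+1)) (le_trans h2 h1)
  linarith

lemma facet_aux {d m : ℕ} (a : Fin m → Fin (d+1) → ℝ) (b : Fin m → ℝ)
    (P : Set (Fin (d+1) → ℝ)) (hcomp : IsCompact P) (hint : (interior P).Nonempty) :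
    ∀ s : Finset (Fin m), P = {x | ∀ i ∈ s, ∑ j, a i j * x j ≤ b i} →
    ∃ (α : Fin (d+1) → ℝ) (β : ℝ) (z : Fin (d+1) → ℝ) (ε : ℝ), 0 < ε ∧ α ≠ 0 ∧
      (∀ x ∈ P, ∑ j, α j * x j ≤ β) ∧ (∑ j, α j * z j = β) ∧
      (∀ x ∈ Metric.ball z ε, ∑ j, α j * x j ≤ β → x ∈ P) := by
  intro s
  induction s using Finset.strongInduction with
  | _ s ih =>
  intro hP
  by_cases hred : ∃ i ∈ s, P = {x | ∀ k ∈ s.erase i, ∑ j, a k j * x j ≤ b k}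
  · obtain ⟨i, hi, hPi⟩ := hred
    exact ih (s.erase i) (Finset.erase_ssubset hi) hPi
  push_neg at hred
  -- s is nonempty
  rcases Finset.eq_empty_or_nonempty s with hs | ⟨i₀, hi₀⟩
  · exfalso
    apply not_univ_compact hcomp
    rw [hP, hs]
    simp
  -- every constraint in s has nonzero normal vector
  have hnz : ∀ k ∈ s, ∃ j₁, a k j₁ ≠ 0 := by
    intro k hk
    by_contra h0
    push_neg at h0
    rcases le_or_gt 0 (b k) with hb | hb
    · apply hred k hk
      rw [hP]
      ext x
      simp only [Set.mem_setOf_eq]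
      constructor
      · exact fun h i hi => h i (Finset.mem_of_mem_erase hi)
      · intro h i hi
        rcases eq_or_ne i k with rfl | hne
        · simpa [h0] using hb
        · exact h i (Finset.mem_erase.2 ⟨hne, hi⟩)
    · obtain ⟨c, hc⟩ := hint
      have hcP : c ∈ P := interior_subset hc
      rw [hP] at hcP
      have := hcP k hk
      simp only [h0, zero_mul, Finset.sum_const_zero] at this
      linarith
  -- interior point satisfies all constraints strictly
  obtain ⟨c, hc⟩ := hint
  obtain ⟨δ, hδ, hball⟩ := Metric.isOpen_iff.1 isOpen_interior c hc
  have hcP : c ∈ P := interior_subset hc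
  have hstrict : ∀ k ∈ s, ∑ j, a k j * c j < b k := by
    intro k hk
    rcases lt_or_eq_of_le ((hP ▸ hcP) k hk) with h | h
    · exact h
    exfalso
    obtain ⟨j₁, hj₁⟩ := hnz k hk
    set M : ℝ := ∑ j, |a k j| with hM
    have hMnn : 0 ≤ M := Finset.sum_nonneg fun j _ => abs_nonneg _
    set t : ℝ := δ / (2 * (M + 1)) with ht
    have ht0 : 0 < t := by positivity
    set c' : Fin (d+1) → ℝ := fun j => c j + t * a k j with hc'
    have hc'mem : c' ∈ Metric.ball c δ := by
      rw [Metric.mem_ball]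
      rw [dist_pi_lt_iff hδ]
      intro j
      have habs : |a k j| ≤ M := by
        apply Finset.single_le_sum (f := fun j => |a k j|) (fun j _ => abs_nonneg _)
          (Finset.mem_univ j)
      have : dist (c' j) (c j) = t * |a k j| := by
        rw [hc']
        simp [Real.dist_eq, abs_mul, abs_of_pos ht0]
      rw [this]
      calc t * |a k j| ≤ t * M := by nlinarith
        _ < δ := by rw [ht]; rw [div_mul_eq_mul_div]; rw [div_lt_iff₀ (by positivity)]; nlinarith
    have hc'P : c' ∈ P := interior_subset (hball hc'mem)
    have hle := (hP ▸ hc'P) k hk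
    have hsum : ∑ j, a k j * c' j = ∑ j, a k j * c j + t * ∑ j, (a k j)^2 := by
      rw [hc', Finset.mul_sum, ← Finset.sum_add_distrib]
      apply Finset.sum_congr rfl
      intros; ring
    have hS : 0 < ∑ j, (a k j)^2 :=
      Finset.sum_pos' (fun j _ => sq_nonneg _) ⟨j₁, Finset.mem_univ j₁, by positivity⟩
    rw [hsum, h] at hle
    nlinarith
  -- get the irredundancy witness x for i₀
  have hPQ : P ≠ {x | ∀ k ∈ s.erase i₀, ∑ j, a k j * x j ≤ b k} := hred i₀ hi₀
  have hsub : P ⊆ {x | ∀ k ∈ s.erase i₀, ∑ j, a k j * x j ≤ b k} := by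
    rw [hP]
    intro x hx k hk
    exact hx k (Finset.mem_of_mem_erase hk)
  obtain ⟨x, hxQ, hxP⟩ : ∃ x, x ∈ {x | ∀ k ∈ s.erase i₀, ∑ j, a k j * x j ≤ b k} ∧ x ∉ P := by
    by_contra h
    push_neg at h
    exact hPQ (Set.Subset.antisymm hsub fun y hy => h y hy)
  have hxviol : b i₀ < ∑ j, a i₀ j * x j := by
    rw [hP] at hxP
    simp only [Set.mem_setOf_eq, not_forall] at hxP
    obtain ⟨i, hi, hviol⟩ := hxP
    push_neg at hviol
    rcases eq_or_ne i i₀ with rfl | hne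
    · exact hviol
    · exact absurd (hxQ i (Finset.mem_erase.2 ⟨hne, hi⟩)) (not_le.2 hviol)
  -- define z on the segment from c to x
  set A : ℝ := ∑ j, a i₀ j * c j with hA
  set B : ℝ := ∑ j, a i₀ j * x j with hB
  have hAlt : A < b i₀ := hstrict i₀ hi₀
  have hABlt : A < B := lt_trans hAlt hxviol
  set t : ℝ := (b i₀ - A) / (B - A) with ht
  have ht0 : 0 < t := by
    apply div_pos <;> linarith
  have ht1 : t < 1 := by
    rw [ht, div_lt_one (by linarith)]
    linarith
  set z : Fin (d+1) → ℝ := fun j => (1 - t) * c j + t * x j with hz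
  have hexpand : ∀ v : Fin (d+1) → ℝ,
      ∑ j, v j * z j = (1 - t) * (∑ j, v j * c j) + t * (∑ j, v j * x j) := by
    intro v
    rw [Finset.mul_sum, Finset.mul_sum, ← Finset.sum_add_distrib]
    apply Finset.sum_congr rfl
    intros; rw [hz]; ring
  have hzeq : ∑ j, a i₀ j * z j = b i₀ := by
    have hBA : B - A ≠ 0 := by linarith
    rw [hexpand, ← hA, ← hB, ht]
    field_simp
    ring
  have hzstrict : ∀ k ∈ s.erase i₀, ∑ j, a k j * z j < b k := by
    intro k hk
    rw [hexpand]
    have h1 : ∑ j, a k j * c j < b k := hstrict k (Finset.mem_of_mem_erase hk)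
    have h2 : ∑ j, a k j * x j ≤ b k := hxQ k hk
    nlinarith
  -- find ε
  have hOopen : IsOpen {y : Fin (d+1) → ℝ | ∀ k ∈ s.erase i₀, ∑ j, a k j * y j < b k} := by
    have : {y : Fin (d+1) → ℝ | ∀ k ∈ s.erase i₀, ∑ j, a k j * y j < b k} =
        ⋂ k ∈ s.erase i₀, {y | ∑ j, a k j * y j < b k} := by
      ext y; simp
    rw [this]
    exact isOpen_biInter_finset fun k _ => isOpen_lt (lin_continuous' (a k)) continuous_const
  obtain ⟨ε, hε, hεball⟩ := Metric.isOpen_iff.1 hOopen z hzstrict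
  obtain ⟨j₁, hj₁⟩ := hnz i₀ hi₀
  refine ⟨a i₀, b i₀, z, ε, hε, ?_, ?_, hzeq, ?_⟩
  · intro h0
    exact hj₁ (congrFun h0 j₁)
  · intro y hy
    exact (hP ▸ hy) i₀ hi₀
  · intro y hy hyle
    rw [hP]
    intro i hi
    rcases eq_or_ne i i₀ with rfl | hne
    · exact hyle
    · exact le_of_lt (hεball hy i (Finset.mem_erase.2 ⟨hne, hi⟩))


section Reduce
variable {d' : ℕ} (i₀ : Fin (d' + 1)) (α : Fin (d' + 1) → ℝ) (β : ℝ)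

/-- Parametrization of the hyperplane `{x | ∑ α j * x j = β}` by `ℝ^{d'}`. -/
noncomputable def phiMap (y : Fin d' → ℝ) : Fin (d' + 1) → ℝ :=
  i₀.insertNth ((β - ∑ k, α (i₀.succAbove k) * y k) / α i₀) y

lemma phiMap_apply_same (y : Fin d' → ℝ) :
    phiMap i₀ α β y i₀ = (β - ∑ k, α (i₀.succAbove k) * y k) / α i₀ :=
  Fin.insertNth_apply_same i₀ _ _

lemma phiMap_apply_succAbove (y : Fin d' → ℝ) (k : Fin d') :
    phiMap i₀ α β y (i₀.succAbove k) = y k :=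
  Fin.insertNth_apply_succAbove i₀ _ _ _

lemma phiMap_sum (hα : α i₀ ≠ 0) (y : Fin d' → ℝ) :
    ∑ j, α j * phiMap i₀ α β y j = β := by
  rw [Fin.sum_univ_succAbove (fun j => α j * phiMap i₀ α β y j) i₀,
    phiMap_apply_same]
  have : ∀ k, α (i₀.succAbove k) * phiMap i₀ α β y (i₀.succAbove k)
      = α (i₀.succAbove k) * y k := fun k => by rw [phiMap_apply_succAbove]
  rw [Finset.sum_congr rfl fun k _ => this k]
  field_simp
  ring

lemma phiMap_continuous : Continuous (phiMap i₀ α β) := by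
  apply continuous_pi
  intro j
  rcases eq_or_ne j i₀ with rfl | hne
  · simp only [phiMap_apply_same]
    exact ((continuous_const.sub
      (continuous_finset_sum _ fun k _ => continuous_const.mul (continuous_apply k))).div_const _)
  · obtain ⟨k, rfl⟩ := Fin.exists_succAbove_eq hne
    simp only [phiMap_apply_succAbove]
    exact continuous_apply k

lemma phiMap_section (hα : α i₀ ≠ 0) (x : Fin (d' + 1) → ℝ)
    (hx : ∑ j, α j * x j = β) :
    phiMap i₀ α β (fun k => x (i₀.succAbove k)) = x := by
  funext j
  rcases eq_or_ne j i₀ with h | hne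
  · rw [h, phiMap_apply_same]
    rw [Fin.sum_univ_succAbove (fun j => α j * x j) i₀] at hx
    rw [div_eq_iff hα]
    linarith
  · obtain ⟨k, rfl⟩ := Fin.exists_succAbove_eq hne
    rw [phiMap_apply_succAbove]

lemma phiMap_affine (hα : α i₀ ≠ 0) (v : Fin (d' + 1) → ℝ) (y : Fin d' → ℝ) :
    ∑ j, v j * phiMap i₀ α β y j =
      ∑ k, (v (i₀.succAbove k) - v i₀ * α (i₀.succAbove k) / α i₀) * y k
        + v i₀ * β / α i₀ := by
  rw [Fin.sum_univ_succAbove (fun j => v j * phiMap i₀ α β y j) i₀, phiMap_apply_same]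
  have h1 : ∀ k, v (i₀.succAbove k) * phiMap i₀ α β y (i₀.succAbove k)
      = v (i₀.succAbove k) * y k := fun k => by rw [phiMap_apply_succAbove]
  rw [Finset.sum_congr rfl fun k _ => h1 k]
  have h2 : ∑ k, (v (i₀.succAbove k) - v i₀ * α (i₀.succAbove k) / α i₀) * y k
      = ∑ k, v (i₀.succAbove k) * y k
        - (v i₀ / α i₀) * ∑ k, α (i₀.succAbove k) * y k := by
    rw [Finset.mul_sum, ← Finset.sum_sub_distrib]
    exact Finset.sum_congr rfl fun k _ => by ring
  rw [h2]
  field_simp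
  ring

/-- The substitution sending a polynomial on `ℝ^{d'+1}` to its restriction to the
hyperplane, as a polynomial on `ℝ^{d'}`. -/
noncomputable def substArg : Fin (d' + 1) → MvPolynomial (Fin d') ℝ :=
  i₀.insertNth (C (β / α i₀) - ∑ k, C (α (i₀.succAbove k) / α i₀) * X k) X

lemma eval_substArg (hα : α i₀ ≠ 0) (y : Fin d' → ℝ) :
    (fun i => eval y (substArg i₀ α β i)) = phiMap i₀ α β y := by
  funext i
  rcases eq_or_ne i i₀ with h | hne
  · rw [h, substArg, Fin.insertNth_apply_same, phiMap_apply_same]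
    simp only [map_sub, eval_C, map_sum, map_mul, eval_X]
    have hsum : ∑ k, α (i₀.succAbove k) / α i₀ * y k
        = (∑ k, α (i₀.succAbove k) * y k) / α i₀ := by
      rw [Finset.sum_div]
      exact Finset.sum_congr rfl fun k _ => by ring
    rw [hsum, sub_div]
  · obtain ⟨k, rfl⟩ := Fin.exists_succAbove_eq hne
    rw [substArg, Fin.insertNth_apply_succAbove, phiMap_apply_succAbove, eval_X]

lemma eval_subst (hα : α i₀ ≠ 0) (p : MvPolynomial (Fin (d' + 1)) ℝ) (y : Fin d' → ℝ) :
    eval y (eval₂ C (substArg i₀ α β) p) = eval (phiMap i₀ α β y) p := by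
  rw [← eval_assoc]
  congr 1
  rw [← eval_substArg i₀ α β hα y]
  rfl

end Reduce

lemma rep_ge_dim (d : ℕ) :
    ∀ {m l : ℕ} (a : Fin m → Fin d → ℝ) (b : Fin m → ℝ) (P : Set (Fin d → ℝ)),
      P = {x | ∀ i, ∑ j, a i j * x j ≤ b i} → IsCompact P → (interior P).Nonempty →
      ∀ p : Fin l → MvPolynomial (Fin d) ℝ,
        P = {x : Fin d → ℝ | ∀ j, 0 ≤ eval x (p j)} → d ≤ l := by
  induction d with
  | zero => intro m l a b P _ _ _ p _; exact Nat.zero_le _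
  | succ d' IH =>
    intro m l a b P hP hcomp hint p hrep
    -- l cannot be zero
    rcases Nat.eq_zero_or_pos l with rfl | hlpos
    · exfalso
      apply not_univ_compact hcomp
      rw [hrep]
      ext x
      simp only [Set.mem_setOf_eq, Set.mem_univ, iff_true]
      intro j
      exact j.elim0
    obtain ⟨l', rfl⟩ : ∃ l'', l = l'' + 1 := ⟨l - 1, by omega⟩
    -- find a facet
    have huniv : P = {x | ∀ i ∈ Finset.univ, ∑ j, a i j * x j ≤ b i} := by
      rw [hP]; simp
    obtain ⟨α, β, z, ε, hε, hαne, hPhalf, hzeq, hball⟩ :=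
      facet_aux a b P hcomp hint Finset.univ huniv
    obtain ⟨i₀, hi₀⟩ := Function.ne_iff.1 hαne
    -- the reduced set
    set P' : Set (Fin d' → ℝ) := (phiMap i₀ α β) ⁻¹' P with hP'def
    -- polyhedral description of P'
    have hP'poly : P' = {y | ∀ i, ∑ k,
        (a i (i₀.succAbove k) - a i i₀ * α (i₀.succAbove k) / α i₀) * y k
          ≤ b i - a i i₀ * β / α i₀} := by
      ext y
      simp only [hP'def, Set.mem_preimage, hP, Set.mem_setOf_eq]
      apply forall_congr'
      intro i
      rw [phiMap_affine i₀ α β hi₀ (a i) y]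
      constructor <;> intro h <;> linarith
    -- compactness of P'
    have hψcont : Continuous fun x : Fin (d'+1) → ℝ => (fun k => x (i₀.succAbove k) : Fin d' → ℝ) :=
      continuous_pi fun k => continuous_apply (i₀.succAbove k)
    have hP'img : P' = (fun x : Fin (d'+1) → ℝ => (fun k => x (i₀.succAbove k) : Fin d' → ℝ)) ''
        (P ∩ {x | ∑ j, α j * x j = β}) := by
      ext y
      constructor
      · intro hy
        refine ⟨phiMap i₀ α β y, ⟨hy, phiMap_sum i₀ α β hi₀ y⟩, ?_⟩
        funext k
        exact phiMap_apply_succAbove i₀ α β y k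
      · rintro ⟨x, ⟨hxP, hxH⟩, rfl⟩
        show phiMap i₀ α β _ ∈ P
        rw [phiMap_section i₀ α β hi₀ x hxH]
        exact hxP
    have hcomp' : IsCompact P' := by
      rw [hP'img]
      exact (hcomp.inter_right (isClosed_eq (lin_continuous' α) continuous_const)).image hψcont
    -- nonempty interior of P'
    set W : Set (Fin d' → ℝ) := (phiMap i₀ α β) ⁻¹' (Metric.ball z ε) with hWdef
    have hWopen : IsOpen W := Metric.isOpen_ball.preimage (phiMap_continuous i₀ α β)
    have hWsub : W ⊆ P' := by
      intro y hy
      exact hball _ hy (le_of_eq (phiMap_sum i₀ α β hi₀ y))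
    have hzW : (fun k => z (i₀.succAbove k)) ∈ W := by
      show phiMap i₀ α β _ ∈ Metric.ball z ε
      rw [phiMap_section i₀ α β hi₀ z hzeq]
      exact Metric.mem_ball_self hε
    have hint' : (interior P').Nonempty :=
      ⟨_, interior_maximal hWsub hWopen hzW⟩
    -- some polynomial vanishes on the hyperplane
    set q : Fin (l' + 1) → MvPolynomial (Fin d') ℝ :=
      fun j => eval₂ C (substArg i₀ α β) (p j) with hqdef
    have hqeval : ∀ j y, eval y (q j) = eval (phiMap i₀ α β y) (p j) :=
      fun j y => eval_subst i₀ α β hi₀ (p j) y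
    have hcov : ∀ y ∈ W, ∃ j, eval y (q j) = 0 := by
      intro y hy
      set x := phiMap i₀ α β y with hxdef
      have hxP : x ∈ P := hWsub hy
      have hxeq : ∑ j, α j * x j = β := phiMap_sum i₀ α β hi₀ y
      have hS : 0 < ∑ j, α j ^ 2 :=
        Finset.sum_pos' (fun j _ => sq_nonneg _) ⟨i₀, Finset.mem_univ i₀, by simpa [sq_abs] using sq_pos_of_ne_zero (abs_ne_zero.2 hi₀)⟩
      set xn : ℕ → Fin (d'+1) → ℝ := fun n j' => x j' + (1 / (n+1 : ℝ)) * α j' with hxndef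
      have hxn_notP : ∀ n, xn n ∉ P := by
        intro n hn
        have h1 := hPhalf _ hn
        have h2 : ∑ j, α j * xn n j = β + (1 / (n+1 : ℝ)) * ∑ j, α j ^ 2 := by
          rw [Finset.mul_sum, ← hxeq, ← Finset.sum_add_distrib]
          exact Finset.sum_congr rfl fun j _ => by simp [hxndef]; ring
        rw [h2] at h1
        have : (0:ℝ) < 1 / (n+1 : ℝ) := by positivity
        nlinarith
      have hxn_viol : ∀ n, ∃ j, eval (xn n) (p j) < 0 := by
        intro n
        have := hxn_notP n
        rw [hrep] at this
        simp only [Set.mem_setOf_eq, not_forall, not_le] at this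
        exact this
      choose jn hjn using hxn_viol
      obtain ⟨j, hjinf⟩ := Finite.exists_infinite_fiber jn
      have hinf : {n | jn n = j}.Infinite := Set.infinite_coe_iff.1 hjinf
      have hge : 0 ≤ eval x (p j) := (hrep ▸ hxP) j
      have hle : eval x (p j) ≤ 0 := by
        by_contra hpos
        push_neg at hpos
        have hT : Filter.Tendsto xn Filter.atTop (nhds x) := by
          rw [tendsto_pi_nhds]
          intro j'
          have := (tendsto_one_div_add_atTop_nhds_zero_nat.mul_const (α j')).const_add (x j')
          simpa [hxndef, one_div] using this
        have hev : ∀ᶠ n in Filter.atTop, 0 < eval (xn n) (p j) :=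
          (((MvPolynomial.continuous_eval (p j)).continuousAt.tendsto.comp hT).eventually
            (eventually_gt_nhds hpos))
        have hfreq : ∃ᶠ n in Filter.atTop, jn n = j :=
          Nat.frequently_atTop_iff_infinite.2 hinf
        obtain ⟨n, h1, h2⟩ := (hev.and_frequently hfreq).exists
        have := hjn n
        rw [h2] at this
        linarith
      exact ⟨j, by rw [hqeval]; linarith⟩
    obtain ⟨j₀, hj₀⟩ := exists_poly_vanishes q hWopen ⟨_, hzW⟩ hcov
    -- the reduced representation
    have hrep' : P' = {y : Fin d' → ℝ | ∀ k, 0 ≤ eval y (q (j₀.succAbove k))} := by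
      ext y
      simp only [hP'def, Set.mem_preimage, hrep, Set.mem_setOf_eq]
      constructor
      · intro h k
        rw [hqeval]
        exact h (j₀.succAbove k)
      · intro h j
        rcases eq_or_ne j j₀ with rfl | hne
        · rw [← hqeval, hj₀ y]
        · obtain ⟨k, rfl⟩ := Fin.exists_succAbove_eq hne
          rw [← hqeval]
          exact h k
    exact Nat.succ_le_succ (IH _ _ P' hP'poly hcomp' hint' _ hrep')

/-- The minimal number of polynomials in a `P`-representation of `P`. -/
noncomputable def mP (d : ℕ) (P : Set (Fin d → ℝ)) : ℕ :=
  sInf {l : ℕ | ∃ p : Fin l → MvPolynomial (Fin d) ℝ,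
    P = {x : Fin d → ℝ | ∀ j, 0 ≤ MvPolynomial.eval x (p j)}}

/-- For every full-dimensional polytope `P ⊂ ℝ^d`, at least `d` polynomial
inequalities are needed in any `P`-representation: `m_P(P) ≥ d`. -/
theorem mP_ge_dim (d : ℕ) (P : Set (Fin d → ℝ))
    (hpoly : ∃ (m : ℕ) (a : Fin m → Fin d → ℝ) (b : Fin m → ℝ),
      P = {x | ∀ i, ∑ j, a i j * x j ≤ b i})
    (hcomp : IsCompact P)
    (hfull : (interior P).Nonempty) :
    d ≤ mP d P := by
  obtain ⟨m, a, b, hP⟩ := hpoly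
  apply le_csInf
  · refine ⟨m, fun i => C (b i) - ∑ j, C (a i j) * X j, ?_⟩
    rw [hP]
    ext x
    simp only [Set.mem_setOf_eq, map_sub, eval_C, map_sum, map_mul, eval_X]
    exact forall_congr' fun i => by constructor <;> intro h <;> linarith
  · rintro l ⟨p, hrep⟩
    exact rep_ge_dim d a b P hP hcomp hfull p hrep
end

section
/- If P is a d-prism or a d-pyramid with basis a (d−1)-polytope Q, then m_P(P) = m_P(Q) + 1. -/
open MvPolynomial Set Filter

/-- Union of a closed set and another set, both with empty interior, has empty interior. -/
lemma interior_union_empty {X : Type*} [TopologicalSpace X] {A B : Set X}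
    (hA : IsClosed A) (hA' : interior A = ∅) (hB' : interior B = ∅) :
    interior (A ∪ B) = ∅ := by
  have hop : IsOpen (interior (A ∪ B) \ A) := isOpen_interior.sdiff hA
  have hsub : interior (A ∪ B) \ A ⊆ B := fun x hx =>
    ((interior_subset hx.1).resolve_left hx.2)
  have h1 : interior (A ∪ B) \ A = ∅ := by
    have := hop.subset_interior_iff.2 hsub
    rw [hB'] at this
    exact subset_empty_iff.mp this
  have h2 : interior (A ∪ B) ⊆ A := by
    rw [diff_eq_empty] at h1; exact h1
  have h3 : interior (A ∪ B) ⊆ interior A := interior_maximal h2 isOpen_interior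
  rw [hA'] at h3
  exact subset_empty_iff.mp h3

lemma exists_interior_nonempty_of_cover {X : Type*} [TopologicalSpace X] {ι : Type*} [Fintype ι]
    {Z : ι → Set X} (hZ : ∀ i, IsClosed (Z i)) {U : Set X} (hU : IsOpen U) (hne : U.Nonempty)
    (hcov : U ⊆ ⋃ i, Z i) : ∃ i, (interior (Z i)).Nonempty := by
  by_contra h
  push_neg at h
  classical
  have h' : ∀ i, interior (Z i) = ∅ := h
  have key : ∀ s : Finset ι, interior (⋃ i ∈ s, Z i) = ∅ := by
    intro s
    induction s using Finset.induction_on with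
    | empty => simp
    | insert _ _ hns ih =>
      rw [Finset.set_biUnion_insert]
      exact interior_union_empty (hZ _) (h' _) ih
  have hcov' : U ⊆ ⋃ i ∈ Finset.univ, Z i := by simpa using hcov
  have := interior_maximal hcov' hU
  rw [key Finset.univ] at this
  exact hne.ne_empty (subset_empty_iff.mp this)

/-- A real polynomial vanishing on a nonempty open set vanishes identically. -/
lemma eval_eq_zero_of_zero_on_open {n : ℕ} (p : MvPolynomial (Fin n) ℝ) {U : Set (Fin n → ℝ)}
    (hU : IsOpen U) (hne : U.Nonempty) (hz : ∀ y ∈ U, eval y p = 0) (y : Fin n → ℝ) :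
    eval y p = 0 := by
  obtain ⟨z₀, hz₀⟩ := hne
  have hana : AnalyticOnNhd ℝ (fun y : Fin n → ℝ => eval y p) univ :=
    AnalyticOnNhd.eval_mvPolynomial p
  have hev : (fun y : Fin n → ℝ => eval y p) =ᶠ[nhds z₀] 0 :=
    Filter.eventuallyEq_of_mem (hU.mem_nhds hz₀) (fun y hy => hz y hy)
  have := hana.eqOn_zero_of_preconnected_of_eventuallyEq_zero isPreconnected_univ
    (mem_univ z₀) hev
  exact this (mem_univ y)

lemma continuous_eval_poly {n : ℕ} (p : MvPolynomial (Fin n) ℝ) :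
    Continuous fun y : Fin n → ℝ => eval y p := by
  rw [continuous_iff_continuousAt]
  intro x
  exact ((AnalyticOnNhd.eval_mvPolynomial p) x (mem_univ x)).continuousAt

variable {d : ℕ}

/-- Restriction of a polynomial in `d+1` variables to the hyperplane `x_last = 0`. -/
noncomputable def resP (p : MvPolynomial (Fin (d + 1)) ℝ) : MvPolynomial (Fin d) ℝ :=
  eval₂ C (Fin.snoc X 0) p

lemma eval_resP (p : MvPolynomial (Fin (d + 1)) ℝ) (y : Fin d → ℝ) :
    eval y (resP p) = eval (Fin.snoc y 0) p := by
  rw [resP, show (eval y) (eval₂ C (Fin.snoc X 0) p)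
      = (eval y : MvPolynomial (Fin d) ℝ →+* ℝ) (eval₂ C (Fin.snoc X 0) p) from rfl,
    eval₂_comp_left]
  have h1 : (eval y : MvPolynomial (Fin d) ℝ →+* ℝ).comp (C : ℝ →+* MvPolynomial (Fin d) ℝ)
      = RingHom.id ℝ := by
    ext r; simp
  have h2 : ((eval y : MvPolynomial (Fin d) ℝ →+* ℝ) ∘ (Fin.snoc X 0 : Fin (d+1) → _))
      = Fin.snoc y 0 := by
    funext i
    induction i using Fin.lastCases with
    | last => simp [Fin.snoc_last]
    | cast i => simp [Fin.snoc_castSucc]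
  rw [h1, h2]
  rfl

/-- Homogenized substitution polynomial: substitutes `y i ↦ (x_i - v_i * s)` where
`s = x_last / v_last`, each monomial padded with `(1 - s)` powers up to total degree `E`. -/
noncomputable def hpoly (v : Fin (d + 1) → ℝ) (E : ℕ) (p : MvPolynomial (Fin d) ℝ) :
    MvPolynomial (Fin (d + 1)) ℝ :=
  ∑ α ∈ p.support,
    C (coeff α p) *
      (∏ i, (X i.castSucc - C (v i.castSucc) * (C (v (Fin.last d))⁻¹ * X (Fin.last d))) ^ α i) *
      (1 - C (v (Fin.last d))⁻¹ * X (Fin.last d)) ^ (E - ∑ i, α i)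

lemma eval_hpoly (v : Fin (d + 1) → ℝ) (E : ℕ) (p : MvPolynomial (Fin d) ℝ)
    (x : Fin (d + 1) → ℝ) :
    eval x (hpoly v E p) = ∑ α ∈ p.support,
      coeff α p *
        (∏ i, (x i.castSucc - v i.castSucc * ((v (Fin.last d))⁻¹ * x (Fin.last d))) ^ α i) *
        (1 - (v (Fin.last d))⁻¹ * x (Fin.last d)) ^ (E - ∑ i, α i) := by
  rw [hpoly, map_sum]
  refine Finset.sum_congr rfl fun α _ => ?_
  simp

lemma sum_le_of_mem_support {p : MvPolynomial (Fin d) ℝ} {α : Fin d →₀ ℕ}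
    (hα : α ∈ p.support) : ∑ i, α i ≤ p.totalDegree := by
  have h1 : ∑ i, α i = ∑ i ∈ α.support, α i := by
    rw [Finset.sum_subset (Finset.subset_univ α.support)]
    intro i _ hi
    exact Finsupp.notMem_support_iff.mp hi
  rw [h1]
  exact le_totalDegree hα

lemma eval_hpoly_eq (v : Fin (d + 1) → ℝ) (E : ℕ) (p : MvPolynomial (Fin d) ℝ)
    (x : Fin (d + 1) → ℝ) (q : Fin d → ℝ) (u : ℝ)
    (hu : u = 1 - (v (Fin.last d))⁻¹ * x (Fin.last d))
    (hq : ∀ i, x i.castSucc - v i.castSucc * ((v (Fin.last d))⁻¹ * x (Fin.last d)) = u * q i)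
    (hE : p.totalDegree ≤ E) :
    eval x (hpoly v E p) = u ^ E * eval q p := by
  rw [eval_hpoly, eval_eq' q p, Finset.mul_sum]
  refine Finset.sum_congr rfl fun α hα => ?_
  simp_rw [hq]
  rw [← hu]
  have hle : ∑ i, α i ≤ E := (sum_le_of_mem_support hα).trans hE
  simp_rw [mul_pow]
  rw [Finset.prod_mul_distrib, Finset.prod_pow_eq_pow_sum]
  have : u ^ (∑ i, α i) * u ^ (E - ∑ i, α i) = u ^ E := by
    rw [← pow_add, Nat.add_sub_cancel' hle]
  ring_nf
  rw [mul_assoc (coeff α p), this]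

lemma eval_hpoly_substOnly (v : Fin (d + 1) → ℝ) (p : MvPolynomial (Fin d) ℝ)
    (x : Fin (d + 1) → ℝ) :
    eval x (hpoly v 0 p)
      = eval (fun i => x i.castSucc - v i.castSucc * ((v (Fin.last d))⁻¹ * x (Fin.last d))) p := by
  rw [eval_hpoly, eval_eq']
  refine Finset.sum_congr rfl fun α _ => ?_
  rw [Nat.zero_sub, pow_zero, mul_one]

lemma eval_hpoly_apex (v : Fin (d + 1) → ℝ) (E : ℕ) (p : MvPolynomial (Fin d) ℝ)
    (x : Fin (d + 1) → ℝ) (hu : (v (Fin.last d))⁻¹ * x (Fin.last d) = 1)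
    (hE : p.totalDegree < E) :
    eval x (hpoly v E p) = 0 := by
  rw [eval_hpoly]
  refine Finset.sum_eq_zero fun α hα => ?_
  rw [hu]
  have : (1 : ℝ) - 1 = 0 := by ring
  rw [this, zero_pow, mul_zero]
  exact Nat.sub_ne_zero_of_lt (lt_of_le_of_lt (sum_le_of_mem_support hα) hE)

variable {d : ℕ}

/-- `q ↦ snoc q 0` as a linear map. -/
noncomputable def snocLM (d : ℕ) : (Fin d → ℝ) →ₗ[ℝ] (Fin (d + 1) → ℝ) where
  toFun q := Fin.snoc q 0
  map_add' a b := by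
    funext i
    induction i using Fin.lastCases with
    | last => simp [Fin.snoc_last]
    | cast i => simp [Fin.snoc_castSucc]
  map_smul' c a := by
    funext i
    induction i using Fin.lastCases with
    | last => simp [Fin.snoc_last]
    | cast i => simp [Fin.snoc_castSucc]

lemma pyramid_eq {Q : Set (Fin d → ℝ)} (hQconv : Convex ℝ Q) (hQne : Q.Nonempty)
    (v : Fin (d + 1) → ℝ) :
    convexHull ℝ (((fun q : Fin d → ℝ => (Fin.snoc q 0 : Fin (d + 1) → ℝ)) '' Q) ∪ {v})
      = {x | ∃ q ∈ Q, ∃ t ∈ Set.Icc (0 : ℝ) 1,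
          x = (1 - t) • (Fin.snoc q 0 : Fin (d + 1) → ℝ) + t • v} := by
  have himg : Convex ℝ ((fun q : Fin d → ℝ => (Fin.snoc q 0 : Fin (d + 1) → ℝ)) '' Q) := by
    have : (fun q : Fin d → ℝ => (Fin.snoc q 0 : Fin (d + 1) → ℝ)) '' Q = (snocLM d) '' Q := rfl
    rw [this]
    exact hQconv.linear_image (snocLM d)
  have hne : ((fun q : Fin d → ℝ => (Fin.snoc q 0 : Fin (d + 1) → ℝ)) '' Q).Nonempty :=
    hQne.image _
  rw [Set.union_singleton, convexHull_insert hne, himg.convexHull_eq]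
  ext x
  rw [mem_convexJoin]
  constructor
  · rintro ⟨a, ha, b, ⟨q, hq, rfl⟩, hx⟩
    rw [Set.mem_singleton_iff] at ha
    subst ha
    rw [segment_eq_image] at hx
    obtain ⟨θ, hθ, hx⟩ := hx
    refine ⟨q, hq, 1 - θ, ⟨by linarith [hθ.2], by linarith [hθ.1]⟩, ?_⟩
    rw [← hx]
    have h1 : (1 : ℝ) - (1 - θ) = θ := by ring
    rw [h1]
    abel_nf
  · rintro ⟨q, hq, t, ht, rfl⟩
    refine ⟨v, rfl, Fin.snoc q 0, ⟨q, hq, rfl⟩, ?_⟩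
    rw [segment_eq_image]
    refine ⟨1 - t, ⟨by linarith [ht.2], by linarith [ht.1]⟩, ?_⟩
    show (1 - (1 - t)) • v + (1 - t) • (Fin.snoc q 0 : Fin (d + 1) → ℝ)
      = (1 - t) • (Fin.snoc q 0 : Fin (d + 1) → ℝ) + t • v
    have h1 : (1 : ℝ) - (1 - t) = t := by ring
    rw [h1]; abel_nf

lemma lower_bound {d : ℕ} {Q : Set (Fin d → ℝ)} (hQfull : (interior Q).Nonempty)
    {v : Fin (d + 1) → ℝ} (hv : v (Fin.last d) ≠ 0) {P : Set (Fin (d + 1) → ℝ)}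
    (h1 : ∀ y ∈ Q, (Fin.snoc y 0 : Fin (d + 1) → ℝ) ∈ P)
    (h2 : ∀ x ∈ P, (v (Fin.last d))⁻¹ * x (Fin.last d) ∈ Set.Icc (0 : ℝ) 1)
    (h3 : ∀ x ∈ P, x (Fin.last d) = 0 → ∃ q ∈ Q, x = Fin.snoc q 0)
    (hSP : {l : ℕ | ∃ p : Fin l → MvPolynomial (Fin (d + 1)) ℝ,
      P = {x : Fin (d + 1) → ℝ | ∀ j, 0 ≤ MvPolynomial.eval x (p j)}}.Nonempty) :
    mP d Q + 1 ≤ mP (d + 1) P := by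
  have key : ∀ (k : ℕ) (p : Fin (k + 1) → MvPolynomial (Fin (d + 1)) ℝ),
      P = {x | ∀ j, 0 ≤ eval x (p j)} → mP d Q ≤ k := by
    intro k p hp
    have hq : ∀ (j) (y : Fin d → ℝ), eval y (resP (p j)) = eval (Fin.snoc y 0) (p j) :=
      fun j y => eval_resP _ _
    have hzero : ∀ y ∈ Q, ∃ j, eval y (resP (p j)) = 0 := by
      intro y hy
      by_contra hcon
      push_neg at hcon
      have hxP : (Fin.snoc y 0 : Fin (d + 1) → ℝ) ∈ P := h1 y hy
      have hge : ∀ j, 0 ≤ eval (Fin.snoc y 0 : Fin (d + 1) → ℝ) (p j) := by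
        rw [hp] at hxP; exact hxP
      have hpos : ∀ j, 0 < eval (Fin.snoc y 0 : Fin (d + 1) → ℝ) (p j) := fun j =>
        lt_of_le_of_ne (hge j) (fun h => hcon j (by rw [hq j y, ← h]))
      have hev : ∀ᶠ z in nhds (Fin.snoc y 0 : Fin (d + 1) → ℝ), ∀ j, 0 < eval z (p j) :=
        eventually_all.2 fun j =>
          ((continuous_eval_poly (p j)).continuousAt).eventually (eventually_gt_nhds (hpos j))
      have hevP : ∀ᶠ z in nhds (Fin.snoc y 0 : Fin (d + 1) → ℝ), z ∈ P :=
        hev.mono (fun z hz => by rw [hp]; exact fun j => (hz j).le)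
      have hT : Tendsto (fun δ : ℝ => (Fin.snoc y 0 : Fin (d + 1) → ℝ) - δ • v)
          (nhdsWithin 0 (Set.Ioi 0)) (nhds (Fin.snoc y 0)) := by
        have hc : Continuous (fun δ : ℝ => (Fin.snoc y 0 : Fin (d + 1) → ℝ) - δ • v) := by
          fun_prop
        have h0 := hc.tendsto 0
        simp only [zero_smul, sub_zero] at h0
        exact h0.mono_left nhdsWithin_le_nhds
      obtain ⟨δ, hδP, hδpos⟩ := ((hT.eventually hevP).and self_mem_nhdsWithin).exists
      have hmem := (h2 _ hδP).1
      have hlast : ((Fin.snoc y 0 : Fin (d + 1) → ℝ) - δ • v) (Fin.last d)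
          = -δ * v (Fin.last d) := by
        simp [Fin.snoc_last]
      rw [hlast] at hmem
      have hc : (v (Fin.last d))⁻¹ * (-δ * v (Fin.last d)) = -δ := by
        field_simp
      rw [hc] at hmem
      have : (0 : ℝ) < δ := hδpos
      linarith
    have hZcl : ∀ j, IsClosed {y : Fin d → ℝ | eval y (resP (p j)) = 0} := fun j =>
      isClosed_eq (continuous_eval_poly (resP (p j))) continuous_const
    have hcov : interior Q ⊆ ⋃ j, {y : Fin d → ℝ | eval y (resP (p j)) = 0} := fun y hy => by
      obtain ⟨j, hj⟩ := hzero y (interior_subset hy)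
      exact Set.mem_iUnion.2 ⟨j, hj⟩
    obtain ⟨j₀, hj₀⟩ := exists_interior_nonempty_of_cover hZcl isOpen_interior hQfull hcov
    have hvan : ∀ y, eval y (resP (p j₀)) = 0 := by
      refine eval_eq_zero_of_zero_on_open (resP (p j₀))
        (U := interior {y : Fin d → ℝ | eval y (resP (p j₀)) = 0}) isOpen_interior hj₀ ?_
      intro z hz
      exact (interior_subset hz : z ∈ {y : Fin d → ℝ | eval y (resP (p j₀)) = 0})
    refine Nat.sInf_le ⟨fun i : Fin k => resP (p (j₀.succAbove i)), ?_⟩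
    ext y
    simp only [Set.mem_setOf_eq]
    constructor
    · intro hy i
      have hyP : (Fin.snoc y 0 : Fin (d + 1) → ℝ) ∈ P := h1 y hy
      rw [hp] at hyP
      rw [hq]; exact hyP _
    · intro hy
      have hall : ∀ j, 0 ≤ eval (Fin.snoc y 0 : Fin (d + 1) → ℝ) (p j) := by
        intro j
        rcases eq_or_ne j j₀ with rfl | hne
        · rw [← hq]; exact (hvan y).ge
        · obtain ⟨i, rfl⟩ := Fin.exists_succAbove_eq hne
          rw [← hq]; exact hy i
      have hxP : (Fin.snoc y 0 : Fin (d + 1) → ℝ) ∈ P := by rw [hp]; exact hall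
      obtain ⟨q', hq', heq⟩ := h3 _ hxP (by simp)
      have hyq : y = q' := by
        funext i
        have := congrFun heq i.castSucc
        simpa using this
      rw [hyq]; exact hq'
  obtain ⟨p, hp⟩ := Nat.sInf_mem hSP
  have hl : sInf {l : ℕ | ∃ p : Fin l → MvPolynomial (Fin (d + 1)) ℝ,
      P = {x : Fin (d + 1) → ℝ | ∀ j, 0 ≤ MvPolynomial.eval x (p j)}} ≠ 0 := by
    intro h0
    have hPuniv : P = Set.univ := by
      rw [hp]
      ext x
      simp only [Set.mem_setOf_eq, Set.mem_univ, iff_true]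
      intro j
      exact absurd j.isLt (by simp [h0])
    have := (h2 ((2 : ℝ) • v) (by rw [hPuniv]; exact Set.mem_univ _)).2
    have hc : (v (Fin.last d))⁻¹ * (((2 : ℝ) • v) (Fin.last d)) = 2 := by
      simp only [Pi.smul_apply, smul_eq_mul]
      field_simp
    rw [hc] at this
    linarith
  obtain ⟨k, hk⟩ := Nat.exists_eq_succ_of_ne_zero hl
  have hp' : P = {x : Fin (d + 1) → ℝ |
      ∀ j : Fin (k + 1), 0 ≤ eval x (p (Fin.cast hk.symm j))} := by
    rw [Set.ext_iff] at hp
    ext x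
    rw [hp x]
    simp only [Set.mem_setOf_eq]
    constructor
    · intro h j; exact h _
    · intro h j
      have hcast : Fin.cast hk.symm (Fin.cast hk j) = j := rfl
      have := h (Fin.cast hk j)
      rwa [hcast] at this
  have hkey := key k _ hp'
  have hmp : mP (d + 1) P = k + 1 := by
    unfold mP
    exact hk
  rw [hmp]
  exact Nat.succ_le_succ hkey
lemma upper_prism {d : ℕ} {Q : Set (Fin d → ℝ)} {v : Fin (d + 1) → ℝ}
    (hv : v (Fin.last d) ≠ 0) {l : ℕ} (p : Fin l → MvPolynomial (Fin d) ℝ)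
    (hrep : Q = {y : Fin d → ℝ | ∀ j, 0 ≤ eval y (p j)}) :
    ∃ r : Fin (l + 1) → MvPolynomial (Fin (d + 1)) ℝ,
      {x : Fin (d + 1) → ℝ | ∃ q ∈ Q, ∃ t ∈ Set.Icc (0 : ℝ) 1,
        x = (Fin.snoc q 0 : Fin (d + 1) → ℝ) + t • v}
      = {x : Fin (d + 1) → ℝ | ∀ j, 0 ≤ eval x (r j)} := by
  set S : MvPolynomial (Fin (d + 1)) ℝ := C (v (Fin.last d))⁻¹ * X (Fin.last d) with hS
  refine ⟨Fin.cons (S * (1 - S)) (fun j => hpoly v 0 (p j)), ?_⟩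
  have hevS : ∀ x : Fin (d + 1) → ℝ, eval x S = (v (Fin.last d))⁻¹ * x (Fin.last d) := by
    intro x; rw [hS]; simp
  ext x
  simp only [Set.mem_setOf_eq]
  constructor
  · rintro ⟨q, hq, t, ht, rfl⟩
    have hlast : ((Fin.snoc q 0 : Fin (d + 1) → ℝ) + t • v) (Fin.last d)
        = t * v (Fin.last d) := by simp
    have hs : (v (Fin.last d))⁻¹
        * (((Fin.snoc q 0 : Fin (d + 1) → ℝ) + t • v) (Fin.last d)) = t := by
      rw [hlast]; field_simp
    intro j
    refine Fin.cases ?_ ?_ j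
    · rw [Fin.cons_zero, map_mul, map_sub, map_one, hevS, hs]
      have := ht.1
      have := ht.2
      nlinarith
    · intro i
      rw [Fin.cons_succ, eval_hpoly_substOnly]
      have hpt : (fun i : Fin d => ((Fin.snoc q 0 : Fin (d + 1) → ℝ) + t • v) i.castSucc
          - v i.castSucc * ((v (Fin.last d))⁻¹
            * (((Fin.snoc q 0 : Fin (d + 1) → ℝ) + t • v) (Fin.last d)))) = q := by
        funext i
        rw [hs]
        simp [Fin.snoc_castSucc]
        ring
      rw [hpt]
      rw [hrep] at hq
      exact hq i
  · intro hx
    have h0 := hx 0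
    rw [Fin.cons_zero, map_mul, map_sub, map_one, hevS] at h0
    set s : ℝ := (v (Fin.last d))⁻¹ * x (Fin.last d) with hsdef
    have h0s : 0 ≤ s := by nlinarith [sq_nonneg s]
    have h1s : s ≤ 1 := by nlinarith [sq_nonneg (s - 1)]
    refine ⟨fun i => x i.castSucc - v i.castSucc * s, ?_, s, ⟨h0s, h1s⟩, ?_⟩
    · rw [hrep]
      intro j
      have := hx j.succ
      rw [Fin.cons_succ, eval_hpoly_substOnly] at this
      exact this
    · funext i
      induction i using Fin.lastCases with
      | last =>
        simp only [Pi.add_apply, Pi.smul_apply, smul_eq_mul, Fin.snoc_last]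
        rw [hsdef]
        field_simp
        ring
      | cast i =>
        simp only [Pi.add_apply, Pi.smul_apply, smul_eq_mul, Fin.snoc_castSucc]
        ring
lemma upper_pyramid {d : ℕ} {Q : Set (Fin d → ℝ)} (hQcomp : IsCompact Q) (hQne : Q.Nonempty)
    {v : Fin (d + 1) → ℝ} (hv : v (Fin.last d) ≠ 0) {l : ℕ} (p : Fin l → MvPolynomial (Fin d) ℝ)
    (hrep : Q = {y : Fin d → ℝ | ∀ j, 0 ≤ eval y (p j)}) :
    ∃ r : Fin (l + 1) → MvPolynomial (Fin (d + 1)) ℝ,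
      {x : Fin (d + 1) → ℝ | ∃ q ∈ Q, ∃ t ∈ Set.Icc (0 : ℝ) 1,
        x = (1 - t) • (Fin.snoc q 0 : Fin (d + 1) → ℝ) + t • v}
      = {x : Fin (d + 1) → ℝ | ∀ j, 0 ≤ eval x (r j)} := by
  -- a bound on the distances to the projected apex
  obtain ⟨R, hR⟩ := hQcomp.isBounded.subset_closedBall (fun i : Fin d => v i.castSucc)
  have hR0 : 0 ≤ R := by
    obtain ⟨q₀, hq₀⟩ := hQne
    exact dist_nonneg.trans (hR hq₀)
  have hsum : ∀ q ∈ Q, (∑ i, (q i - v i.castSucc) ^ 2) ≤ (d : ℝ) * R ^ 2 := by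
    intro q hq
    have hterm : ∀ i : Fin d, (q i - v i.castSucc) ^ 2 ≤ R ^ 2 := by
      intro i
      have h1 : |q i - v i.castSucc| ≤ R := by
        rw [← Real.dist_eq]
        exact (dist_le_pi_dist q (fun i : Fin d => v i.castSucc) i).trans (hR hq)
      have := abs_le.mp h1
      nlinarith [this.1, this.2]
    calc (∑ i, (q i - v i.castSucc) ^ 2) ≤ ∑ _i : Fin d, R ^ 2 :=
          Finset.sum_le_sum (fun i _ => hterm i)
      _ = (d : ℝ) * R ^ 2 := by
          rw [Finset.sum_const, Finset.card_univ, Fintype.card_fin, nsmul_eq_mul]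
  set A : ℝ := (d : ℝ) * R ^ 2 + 1 with hA
  have hA1 : 1 ≤ A := by
    have : 0 ≤ (d : ℝ) * R ^ 2 := by positivity
    linarith
  set S : MvPolynomial (Fin (d + 1)) ℝ := C (v (Fin.last d))⁻¹ * X (Fin.last d) with hS
  set r₀ : MvPolynomial (Fin (d + 1)) ℝ :=
    S * (1 - S) * C A - S ^ 2 * (∑ i : Fin d, ((X i.castSucc : MvPolynomial (Fin (d + 1)) ℝ) - C (v i.castSucc)) ^ 2) with hr₀
  refine ⟨Fin.cons r₀ (fun j => hpoly v (2 * ((p j).totalDegree + 1)) (p j)), ?_⟩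
  have hevS : ∀ x : Fin (d + 1) → ℝ, eval x S = (v (Fin.last d))⁻¹ * x (Fin.last d) := by
    intro x; rw [hS]; simp
  have hevr₀ : ∀ x : Fin (d + 1) → ℝ, eval x r₀ =
      ((v (Fin.last d))⁻¹ * x (Fin.last d)) * (1 - (v (Fin.last d))⁻¹ * x (Fin.last d)) * A
        - ((v (Fin.last d))⁻¹ * x (Fin.last d)) ^ 2
          * (∑ i : Fin d, (x i.castSucc - v i.castSucc) ^ 2) := by
    intro x
    rw [hr₀]
    simp only [map_sub, map_mul, map_one, map_pow, map_sum, eval_C, eval_X, hevS]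
  ext x
  simp only [Set.mem_setOf_eq]
  constructor
  · rintro ⟨q, hq, t, ht, rfl⟩
    set x : Fin (d + 1) → ℝ :=
      (1 - t) • (Fin.snoc q 0 : Fin (d + 1) → ℝ) + t • v with hx
    have hlast : x (Fin.last d) = t * v (Fin.last d) := by
      rw [hx]; simp
    have hs : (v (Fin.last d))⁻¹ * x (Fin.last d) = t := by
      rw [hlast]; field_simp
    have hcoord : ∀ i : Fin d, x i.castSucc = (1 - t) * q i + t * v i.castSucc := by
      intro i; rw [hx]; simp
    intro j
    refine Fin.cases ?_ ?_ j
    · rw [Fin.cons_zero, hevr₀, hs]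
      have hxc : ∀ i : Fin d, x i.castSucc - v i.castSucc = (1 - t) * (q i - v i.castSucc) := by
        intro i; rw [hcoord i]; ring
      have hsum2 : (∑ i : Fin d, (x i.castSucc - v i.castSucc) ^ 2)
          = (1 - t) ^ 2 * ∑ i, (q i - v i.castSucc) ^ 2 := by
        rw [Finset.mul_sum]
        refine Finset.sum_congr rfl fun i _ => ?_
        rw [hxc i]; ring
      rw [hsum2]
      have hq2 := hsum q hq
      have hq20 : 0 ≤ ∑ i, (q i - v i.castSucc) ^ 2 :=
        Finset.sum_nonneg fun i _ => sq_nonneg _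
      have ht0 := ht.1
      have ht1 := ht.2
      nlinarith [mul_nonneg ht0 (sub_nonneg.2 ht1), sq_nonneg (t * (1 - t)),
        mul_nonneg (mul_nonneg ht0 (sub_nonneg.2 ht1)) hq20]
    · intro i
      rw [Fin.cons_succ]
      rw [eval_hpoly_eq v _ (p i) x q (1 - t) (by rw [hs]) ?_ (by omega)]
      · have hqi : 0 ≤ eval q (p i) := by rw [hrep] at hq; exact hq i
        have hpow : 0 ≤ (1 - t) ^ (2 * ((p i).totalDegree + 1)) :=
          Even.pow_nonneg (even_two_mul _) _
        exact mul_nonneg hpow hqi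
      · intro i'
        rw [hs, hcoord i']
        ring
  · intro hx
    have h0 := hx 0
    rw [Fin.cons_zero, hevr₀] at h0
    set s : ℝ := (v (Fin.last d))⁻¹ * x (Fin.last d) with hsdef
    have hD0 : 0 ≤ ∑ i : Fin d, (x i.castSucc - v i.castSucc) ^ 2 :=
      Finset.sum_nonneg fun i _ => sq_nonneg _
    rcases eq_or_ne s 1 with hs1 | hs1
    · -- apex case : x = v
      rw [hs1] at h0
      simp only [sub_self, mul_zero, one_mul, zero_mul, one_pow, zero_sub, mul_one] at h0
      have hDz : (∑ i : Fin d, (x i.castSucc - v i.castSucc) ^ 2) = 0 := by linarith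
      have hcz : ∀ i : Fin d, i ∈ Finset.univ → (x i.castSucc - v i.castSucc) ^ 2 = 0 :=
        (Finset.sum_eq_zero_iff_of_nonneg fun i _ => sq_nonneg _).mp hDz
      have hxv : x = v := by
        funext i
        induction i using Fin.lastCases with
        | last =>
          have : x (Fin.last d) = v (Fin.last d) := by
            rw [hsdef] at hs1
            field_simp at hs1
            linarith [hs1]
          exact this
        | cast i =>
          have := hcz i (Finset.mem_univ i)
          have h2 := pow_eq_zero_iff (n := 2) (by norm_num) |>.mp this
          linarith [sub_eq_zero.mp h2]
      obtain ⟨q₀, hq₀⟩ := hQne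
      refine ⟨q₀, hq₀, 1, by norm_num, ?_⟩
      rw [hxv]
      simp
    · -- general case
      have hu : (1 : ℝ) - s ≠ 0 := sub_ne_zero.2 (Ne.symm hs1)
      set q : Fin d → ℝ := fun i => (1 - s)⁻¹ * (x i.castSucc - v i.castSucc * s) with hqdef
      have hqi : ∀ i, x i.castSucc - v i.castSucc * ((v (Fin.last d))⁻¹ * x (Fin.last d))
          = (1 - s) * q i := by
        intro i
        rw [hqdef, ← hsdef]
        field_simp
      have hqQ : q ∈ Q := by
        rw [hrep]
        intro j
        have := hx j.succ
        rw [Fin.cons_succ,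
          eval_hpoly_eq v _ (p j) x q (1 - s) (by rw [hsdef]) hqi (by omega)] at this
        have hpow : 0 < (1 - s) ^ (2 * ((p j).totalDegree + 1)) :=
          Even.pow_pos (even_two_mul _) hu
        nlinarith [this, hpow]
      -- rewrite D
      have hxc : ∀ i : Fin d, x i.castSucc - v i.castSucc = (1 - s) * (q i - v i.castSucc) := by
        intro i
        have := hqi i
        rw [← hsdef] at this
        have hx' : x i.castSucc = (1 - s) * q i + v i.castSucc * s := by linarith
        rw [hx']; ring
      have hsum2 : (∑ i : Fin d, (x i.castSucc - v i.castSucc) ^ 2)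
          = (1 - s) ^ 2 * ∑ i, (q i - v i.castSucc) ^ 2 := by
        rw [Finset.mul_sum]
        refine Finset.sum_congr rfl fun i _ => ?_
        rw [hxc i]; ring
      have hDq0 : 0 ≤ ∑ i, (q i - v i.castSucc) ^ 2 :=
        Finset.sum_nonneg fun i _ => sq_nonneg _
      rw [hsum2] at h0
      -- show s ∈ [0, 1]
      have hs01 : 0 ≤ s * (1 - s) := by
        nlinarith [sq_nonneg (s * (1 - s)), mul_nonneg (mul_nonneg (sq_nonneg s)
          (sq_nonneg (1 - s))) hDq0]
      have h0s : 0 ≤ s := by nlinarith [sq_nonneg s]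
      have h1s : s ≤ 1 := by nlinarith [sq_nonneg (s - 1)]
      refine ⟨q, hqQ, s, ⟨h0s, h1s⟩, ?_⟩
      funext i
      induction i using Fin.lastCases with
      | last =>
        simp only [Pi.add_apply, Pi.smul_apply, smul_eq_mul, Fin.snoc_last, mul_zero, zero_add]
        rw [hsdef]
        field_simp
      | cast i =>
        simp only [Pi.add_apply, Pi.smul_apply, smul_eq_mul, Fin.snoc_castSucc]
        have := hqi i
        rw [← hsdef] at this
        linarith [this]

/-- If `P` is a `(d+1)`-dimensional prism or pyramid over a full-dimensional
polytope `Q ⊂ ℝ^d` (embedded as `Q × {0}`, with apex/translation vector `v` outside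
the hyperplane `x_{d+1} = 0`), then `m_P(P) = m_P(Q) + 1`. -/
theorem mP_prism_pyramid (d : ℕ) (Q : Set (Fin d → ℝ))
    (hQconv : Convex ℝ Q) (hQcomp : IsCompact Q) (hQfull : (interior Q).Nonempty)
    (hQpoly : ∃ (m : ℕ) (a : Fin m → Fin d → ℝ) (b : Fin m → ℝ),
      Q = {x | ∀ i, ∑ j, a i j * x j ≤ b i})
    (v : Fin (d + 1) → ℝ) (hv : v (Fin.last d) ≠ 0)
    (P : Set (Fin (d + 1) → ℝ))
    (hP : P = convexHull ℝ (((fun q : Fin d → ℝ => (Fin.snoc q 0 : Fin (d + 1) → ℝ)) '' Q) ∪ {v})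
        ∨ P = {x | ∃ q ∈ Q, ∃ t ∈ Set.Icc (0 : ℝ) 1,
            x = (Fin.snoc q 0 : Fin (d + 1) → ℝ) + t • v}) :
    mP (d + 1) P = mP d Q + 1 := by
  have hQne : Q.Nonempty := ⟨hQfull.choose, interior_subset hQfull.choose_spec⟩
  have hSQ : {l : ℕ | ∃ p : Fin l → MvPolynomial (Fin d) ℝ,
      Q = {x : Fin d → ℝ | ∀ j, 0 ≤ MvPolynomial.eval x (p j)}}.Nonempty := by
    obtain ⟨m, a, b, hQ⟩ := hQpoly
    refine ⟨m, fun i => C (b i) - ∑ j, C (a i j) * X j, ?_⟩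
    rw [hQ]
    ext x
    simp only [Set.mem_setOf_eq, map_sub, map_sum, map_mul, eval_C, eval_X, sub_nonneg]
  obtain ⟨p, hrep⟩ := Nat.sInf_mem hSQ
  rcases hP with hP | hP
  · -- pyramid case
    rw [pyramid_eq hQconv hQne v] at hP
    obtain ⟨r, hr⟩ := upper_pyramid hQcomp hQne hv p hrep
    have hub : mP (d + 1) P ≤ mP d Q + 1 := Nat.sInf_le ⟨r, hP.trans hr⟩
    have h1 : ∀ y ∈ Q, (Fin.snoc y 0 : Fin (d + 1) → ℝ) ∈ P := by
      intro y hy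
      rw [hP]
      exact ⟨y, hy, 0, by norm_num, by simp⟩
    have h2 : ∀ x ∈ P, (v (Fin.last d))⁻¹ * x (Fin.last d) ∈ Set.Icc (0 : ℝ) 1 := by
      intro x hx
      rw [hP] at hx
      obtain ⟨q, hq, t, ht, rfl⟩ := hx
      simp only [Pi.add_apply, Pi.smul_apply, smul_eq_mul, Fin.snoc_last, mul_zero, zero_add]
      have hc : (v (Fin.last d))⁻¹ * (t * v (Fin.last d)) = t := by field_simp
      rw [hc]
      exact ht
    have h3 : ∀ x ∈ P, x (Fin.last d) = 0 → ∃ q ∈ Q, x = Fin.snoc q 0 := by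
      intro x hx hx0
      rw [hP] at hx
      obtain ⟨q, hq, t, ht, rfl⟩ := hx
      simp only [Pi.add_apply, Pi.smul_apply, smul_eq_mul, Fin.snoc_last, mul_zero,
        zero_add] at hx0
      have ht0 : t = 0 := by
        rcases mul_eq_zero.mp hx0 with h | h
        · exact h
        · exact absurd h hv
      refine ⟨q, hq, ?_⟩
      rw [ht0]
      simp
    have hlb := lower_bound hQfull hv h1 h2 h3 ⟨mP d Q + 1, r, hP.trans hr⟩
    omega
  · -- prism case
    obtain ⟨r, hr⟩ := upper_prism hv p hrep
    have hub : mP (d + 1) P ≤ mP d Q + 1 := Nat.sInf_le ⟨r, hP.trans hr⟩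
    have h1 : ∀ y ∈ Q, (Fin.snoc y 0 : Fin (d + 1) → ℝ) ∈ P := by
      intro y hy
      rw [hP]
      exact ⟨y, hy, 0, by norm_num, by simp⟩
    have h2 : ∀ x ∈ P, (v (Fin.last d))⁻¹ * x (Fin.last d) ∈ Set.Icc (0 : ℝ) 1 := by
      intro x hx
      rw [hP] at hx
      obtain ⟨q, hq, t, ht, rfl⟩ := hx
      simp only [Pi.add_apply, Pi.smul_apply, smul_eq_mul, Fin.snoc_last, zero_add]
      have hc : (v (Fin.last d))⁻¹ * (t * v (Fin.last d)) = t := by field_simp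
      rw [hc]
      exact ht
    have h3 : ∀ x ∈ P, x (Fin.last d) = 0 → ∃ q ∈ Q, x = Fin.snoc q 0 := by
      intro x hx hx0
      rw [hP] at hx
      obtain ⟨q, hq, t, ht, rfl⟩ := hx
      simp only [Pi.add_apply, Pi.smul_apply, smul_eq_mul, Fin.snoc_last, zero_add] at hx0
      have ht0 : t = 0 := by
        rcases mul_eq_zero.mp hx0 with h | h
        · exact h
        · exact absurd h hv
      refine ⟨q, hq, ?_⟩
      rw [ht0]
      simp
    have hlb := lower_bound hQfull hv h1 h2 h3 ⟨mP d Q + 1, r, hP.trans hr⟩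
    omega
end

section
/- For d ≥ 2, the maximal minimal number of polynomials over all d-polyhedra satisfies m̄_P(d) ≤ m_P(d) + 1, where m_P(d) is the corresponding maximum over d-polytopes. -/
open MvPolynomial

namespace MPaux

variable {d : ℕ}

/-- dot product on `Fin d → ℝ` -/
def dt (a x : Fin d → ℝ) : ℝ := ∑ j, a j * x j

lemma dt_add_left (a b x : Fin d → ℝ) : dt (a + b) x = dt a x + dt b x := by
  simp [dt, add_mul, Finset.sum_add_distrib]

lemma dt_neg_left (a x : Fin d → ℝ) : dt (-a) x = - dt a x := by
  simp [dt]

lemma dt_smul_left (r : ℝ) (a x : Fin d → ℝ) : dt (r • a) x = r * dt a x := by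
  simp [dt, Finset.mul_sum, mul_assoc]

lemma dt_smul_right (r : ℝ) (a x : Fin d → ℝ) : dt a (r • x) = r * dt a x := by
  simp [dt, Finset.mul_sum]; apply Finset.sum_congr rfl; intros; ring

lemma dt_sub_right (a x y : Fin d → ℝ) : dt a (x - y) = dt a x - dt a y := by
  simp [dt, mul_sub, Finset.sum_sub_distrib]

lemma dt_add_right (a x y : Fin d → ℝ) : dt a (x + y) = dt a x + dt a y := by
  simp [dt, mul_add, Finset.sum_add_distrib]

lemma dt_zero_right (a : Fin d → ℝ) : dt a 0 = 0 := by simp [dt]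

lemma dt_zero_left (x : Fin d → ℝ) : dt 0 x = 0 := by simp [dt]

lemma dt_sum_left {ι : Type*} (s : Finset ι) (f : ι → Fin d → ℝ) (x : Fin d → ℝ) :
    dt (∑ k ∈ s, f k) x = ∑ k ∈ s, dt (f k) x := by
  simp [dt, Finset.sum_mul]
  rw [Finset.sum_comm]

lemma continuous_dt (a : Fin d → ℝ) : Continuous (dt a) := by
  unfold dt
  exact continuous_finset_sum _ (fun j _ => (continuous_const.mul (continuous_apply j)))

lemma eval_linpoly (w : Fin d → ℝ) (r : ℝ) (x : Fin d → ℝ) :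
    eval x ((C r - ∑ j, C (w j) * X j : MvPolynomial (Fin d) ℝ)) = r - dt w x := by
  simp [dt]

lemma isPolyhedron_linear {ι : Type*} [Fintype ι] (β : ι → Fin d → ℝ) (bb : ι → ℝ) :
    ∃ (m : ℕ) (a : Fin m → Fin d → ℝ) (b : Fin m → ℝ),
      {x : Fin d → ℝ | ∀ k, dt (β k) x ≤ bb k} = {x | ∀ i, ∑ j, a i j * x j ≤ b i} := by
  classical
  refine ⟨Fintype.card ι, fun i => β ((Fintype.equivFin ι).symm i),
    fun i => bb ((Fintype.equivFin ι).symm i), ?_⟩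
  ext x
  simp only [Set.mem_setOf_eq]
  constructor
  · intro h i; exact h _
  · intro h k
    have := h (Fintype.equivFin ι k)
    simpa [dt] using this

lemma isClosed_linear {ι : Type*} [Fintype ι] (β : ι → Fin d → ℝ) (bb : ι → ℝ) :
    IsClosed {x : Fin d → ℝ | ∀ k, dt (β k) x ≤ bb k} := by
  have : {x : Fin d → ℝ | ∀ k, dt (β k) x ≤ bb k} = ⋂ k, {x | dt (β k) x ≤ bb k} := by
    ext x; simp
  rw [this]
  exact isClosed_iInter fun k => isClosed_le (continuous_dt _) continuous_const

lemma card_mem_repset {ι : Type*} [Fintype ι] (β : ι → Fin d → ℝ) (bb : ι → ℝ) :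
    Fintype.card ι ∈ {l : ℕ | ∃ p : Fin l → MvPolynomial (Fin d) ℝ,
      {x : Fin d → ℝ | ∀ k, dt (β k) x ≤ bb k}
        = {x : Fin d → ℝ | ∀ j, 0 ≤ MvPolynomial.eval x (p j)}} := by
  classical
  refine ⟨fun i => C (bb ((Fintype.equivFin ι).symm i))
    - ∑ j, C (β ((Fintype.equivFin ι).symm i) j) * X j, ?_⟩
  ext x
  simp only [Set.mem_setOf_eq]
  constructor
  · intro h i
    rw [eval_linpoly]
    have := h ((Fintype.equivFin ι).symm i)
    linarith
  · intro h k
    have := h (Fintype.equivFin ι k)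
    rw [eval_linpoly] at this
    simp only [Equiv.symm_apply_apply] at this
    linarith

lemma homog (c : Fin d → ℝ) (q : MvPolynomial (Fin d) ℝ) :
    ∃ h : MvPolynomial (Fin d) ℝ, ∀ z : Fin d → ℝ, 0 < 1 + dt c z →
      eval z h = (1 + dt c z) ^ q.totalDegree * eval ((1 + dt c z)⁻¹ • z) q := by
  classical
  set w : MvPolynomial (Fin d) ℝ := C 1 + ∑ j, C (c j) * X j with hw
  have hevw : ∀ z : Fin d → ℝ, eval z w = 1 + dt c z := by
    intro z; simp [hw, dt]
  set D := q.totalDegree with hD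
  refine ⟨∑ α ∈ q.support, monomial α (q.coeff α) * w ^ (D - (∑ i, α i)), ?_⟩
  intro z hz
  set ω := 1 + dt c z with hω
  have hωne : ω ≠ 0 := ne_of_gt hz
  have hdeg : ∀ α ∈ q.support, (∑ i, α i) ≤ D := by
    intro α hα
    have h1 : (α.sum fun _ e => e) ≤ D := le_totalDegree hα
    have h2 : (α.sum fun _ e => e) = ∑ i, α i := Finsupp.sum_fintype _ _ (fun _ => rfl)
    omega
  rw [map_sum, eval_eq' ((ω)⁻¹ • z) q, Finset.mul_sum]
  refine Finset.sum_congr rfl fun α hα => ?_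
  rw [eval_mul, eval_monomial, map_pow, hevw]
  have hprod : (α.prod fun n e => z n ^ e) = ∏ i, z i ^ α i :=
    Finsupp.prod_fintype _ _ (fun _ => pow_zero _)
  have hprod2 : (∏ i, ((ω)⁻¹ • z) i ^ α i) = (ω⁻¹) ^ (∑ i, α i) * ∏ i, z i ^ α i := by
    rw [← Finset.prod_pow_eq_pow_sum, ← Finset.prod_mul_distrib]
    refine Finset.prod_congr rfl fun i _ => ?_
    simp [mul_pow]
  rw [hprod, hprod2]
  have hsplit : ω ^ D = ω ^ (∑ i, α i) * ω ^ (D - ∑ i, α i) := by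
    rw [← pow_add]
    congr 1
    have := hdeg α hα
    omega
  rw [← hω, hsplit]
  have hinv : ω ^ (∑ i, α i) * ω⁻¹ ^ (∑ i, α i) = 1 := by
    rw [← mul_pow, mul_inv_cancel₀ hωne, one_pow]
  calc (coeff α q * ∏ i, z i ^ α i) * ω ^ (D - ∑ i, α i)
      = ((ω ^ (∑ i, α i)) * (ω⁻¹ ^ (∑ i, α i)))
          * ((coeff α q * ∏ i, z i ^ α i) * ω ^ (D - ∑ i, α i)) := by
        rw [hinv, one_mul]
    _ = (ω ^ (∑ i, α i) * ω ^ (D - ∑ i, α i))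
          * (coeff α q * ((ω⁻¹ ^ (∑ i, α i)) * ∏ i, z i ^ α i)) := by ring

lemma exists_projE {ι : Type*} [Fintype ι] (v : ι → EuclideanSpace ℝ (Fin d)) :
    ∃ (t : ℕ) (f : Fin t → EuclideanSpace ℝ (Fin d))
      (π : EuclideanSpace ℝ (Fin d) →ₗ[ℝ] EuclideanSpace ℝ (Fin d)),
      (∀ i x, (inner ℝ (v i) (π x) : ℝ) = inner ℝ (v i) x) ∧
      (∀ j x, (inner ℝ (f j) (π x) : ℝ) = 0) ∧
      (∀ u, (∀ i, (inner ℝ (v i) u : ℝ) = 0) → (∀ j, (inner ℝ (f j) u : ℝ) = 0) → u = 0) := by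
  classical
  set V : Submodule ℝ (EuclideanSpace ℝ (Fin d)) := Submodule.span ℝ (Set.range v) with hV
  set N : Submodule ℝ (EuclideanSpace ℝ (Fin d)) := Vᗮ with hN
  let bas := Module.finBasis ℝ N
  set t := Module.finrank ℝ N
  let f : Fin t → EuclideanSpace ℝ (Fin d) := fun j => (bas j : EuclideanSpace ℝ (Fin d))
  let πE := V.subtype ∘ₗ V.orthogonalProjectionOnto.toLinearMap
  refine ⟨t, f, πE, ?_, ?_, ?_⟩
  · intro i x
    have hsub : x - πE x ∈ Vᗮ := Submodule.sub_starProjection_mem_orthogonal (K := V) x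
    have hvi : v i ∈ V := Submodule.subset_span ⟨i, rfl⟩
    have h0 : (inner ℝ (v i) (x - πE x) : ℝ) = 0 := hsub (v i) hvi
    rw [inner_sub_right] at h0
    linarith
  · intro j x
    have hfj : f j ∈ Vᗮ := (bas j).2
    have hπ : πE x ∈ V := (V.orthogonalProjectionOnto x).2
    have := hfj (πE x) hπ
    rw [real_inner_comm] at this
    exact this
  · intro u hu1 hu2
    have huV : u ∈ Vᗮ := by
      rw [Submodule.mem_orthogonal]
      intro w hw
      induction hw using Submodule.span_induction with
      | mem w hw => obtain ⟨i, rfl⟩ := hw; exact hu1 i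
      | zero => simp
      | add w₁ w₂ _ _ h1 h2 => rw [inner_add_left, h1, h2, add_zero]
      | smul r w _ h => rw [real_inner_smul_left, h, mul_zero]
    have huN : ∀ w ∈ N, (inner ℝ w u : ℝ) = 0 := by
      intro w hw
      have hrepr : w = ∑ j, bas.repr ⟨w, hw⟩ j • (f j) := by
        have h := bas.sum_repr ⟨w, hw⟩
        have : ((∑ j, bas.repr ⟨w, hw⟩ j • bas j : N) : EuclideanSpace ℝ (Fin d))
            = ∑ j, bas.repr ⟨w, hw⟩ j • (f j) := by
          rw [Submodule.coe_sum]
          rfl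
        rw [← this, h]
      rw [hrepr, sum_inner]
      refine Finset.sum_eq_zero fun j _ => ?_
      rw [real_inner_smul_left, hu2 j, mul_zero]
    have : (inner ℝ u u : ℝ) = 0 := huN u huV
    exact inner_self_eq_zero.mp this

noncomputable def eqv {d : ℕ} : (Fin d → ℝ) ≃ₗ[ℝ] EuclideanSpace ℝ (Fin d) :=
  (WithLp.linearEquiv 2 ℝ (Fin d → ℝ)).symm

lemma inner_eqv (a x : Fin d → ℝ) : (inner ℝ (eqv a) (eqv x) : ℝ) = dt a x := by
  simp [PiLp.inner_apply, RCLike.inner_apply, dt, eqv]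
  exact Finset.sum_congr rfl fun _ _ => mul_comm _ _

lemma exists_proj {ι : Type*} [Fintype ι] (v : ι → (Fin d → ℝ)) :
    ∃ (t : ℕ) (f : Fin t → (Fin d → ℝ)) (π : (Fin d → ℝ) →ₗ[ℝ] (Fin d → ℝ)),
      (∀ i x, dt (v i) (π x) = dt (v i) x) ∧
      (∀ j x, dt (f j) (π x) = 0) ∧
      (∀ u, (∀ i, dt (v i) u = 0) → (∀ j, dt (f j) u = 0) → u = 0) := by
  obtain ⟨t, f, πE, h1, h2, h3⟩ := exists_projE (fun i => eqv (v i))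
  refine ⟨t, fun j => eqv.symm (f j), eqv.symm.toLinearMap ∘ₗ πE ∘ₗ eqv.toLinearMap, ?_, ?_, ?_⟩
  · intro i x
    have := h1 i (eqv x)
    rw [← inner_eqv, ← inner_eqv (v i) x]
    simpa using this
  · intro j x
    have := h2 j (eqv x)
    rw [← inner_eqv]
    simpa using this
  · intro u hu1 hu2
    have := h3 (eqv u) (fun i => by rw [inner_eqv]; exact hu1 i)
      (fun j => by have h := hu2 j; rw [← inner_eqv] at h; simpa using h)
    simpa using congrArg eqv.symm this

lemma isCompact_of_posdir (hd : 0 < d) {ι : Type*} [Fintype ι] [Nonempty ι]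
    (β : ι → Fin d → ℝ)
    (hrec : ∀ u : Fin d → ℝ, (∀ o, dt (β o) u ≤ 0) → u = 0) :
    IsCompact {y : Fin d → ℝ | ∀ o, dt (β o) y ≤ 1} := by
  classical
  haveI : Nonempty (Fin d) := ⟨⟨0, hd⟩⟩
  set vec : (Fin d → ℝ) → ι → ℝ := fun u o => max (dt (β o) u) 0 with hvec
  set G : (Fin d → ℝ) → ℝ := fun u => ‖vec u‖ with hG
  have hGcont : Continuous G := by
    apply Continuous.norm
    exact continuous_pi fun o => (continuous_dt (β o)).max continuous_const
  have hsph : IsCompact (Metric.sphere (0 : Fin d → ℝ) 1) := isCompact_sphere _ _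
  have hne : (Metric.sphere (0 : Fin d → ℝ) 1).Nonempty :=
    NormedSpace.sphere_nonempty.mpr (by norm_num)
  obtain ⟨u₀, hu₀mem, hu₀min⟩ := hsph.exists_isMinOn hne hGcont.continuousOn
  set δ := G u₀ with hδ
  have hδpos : 0 < δ := by
    rcases lt_or_eq_of_le (norm_nonneg (vec u₀)) with h | h
    · exact h
    · exfalso
      have hvz : vec u₀ = 0 := by
        rw [← norm_eq_zero]; exact h.symm
      have : u₀ = 0 := by
        apply hrec
        intro o
        have := congrFun hvz o
        simp only [hvec, Pi.zero_apply] at this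
        by_contra hlt
        push_neg at hlt
        rw [max_eq_left (le_of_lt hlt)] at this
        linarith
      have : ‖u₀‖ = 1 := by simpa using hu₀mem
      rw [‹u₀ = 0›] at this
      simp at this
  apply IsCompact.of_isClosed_subset (isCompact_closedBall (0 : Fin d → ℝ) δ⁻¹)
    (isClosed_linear β 1)
  intro y hy
  simp only [Metric.mem_closedBall, dist_zero_right]
  rcases eq_or_ne y 0 with rfl | hy0
  · simp [le_of_lt (inv_pos.mpr hδpos)]
  · set u := ‖y‖⁻¹ • y with hu
    have hyn : (0:ℝ) < ‖y‖ := norm_pos_iff.mpr hy0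
    have humem : u ∈ Metric.sphere (0 : Fin d → ℝ) 1 := by
      simp [hu, norm_smul, abs_of_pos (inv_pos.mpr hyn), inv_mul_cancel₀ (ne_of_gt hyn)]
    have hGu : δ ≤ G u := hu₀min humem
    have hex : ∃ o, δ ≤ |vec u o| := by
      by_contra hcon
      push_neg at hcon
      have : ‖vec u‖ < δ := by
        rw [pi_norm_lt_iff hδpos]
        intro o; exact hcon o
      rw [hG] at hGu
      linarith
    obtain ⟨o, ho⟩ := hex
    have hvo : vec u o = max (dt (β o) u) 0 := rfl
    have hvnn : 0 ≤ vec u o := by rw [hvo]; exact le_max_right _ _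
    rw [abs_of_nonneg hvnn, hvo] at ho
    have hdtu : δ ≤ dt (β o) u := by
      rcases le_or_gt (dt (β o) u) 0 with h | h
      · rw [max_eq_right h] at ho; linarith
      · rwa [max_eq_left (le_of_lt h)] at ho
    have hyu : y = ‖y‖ • u := by
      rw [hu, smul_smul, mul_inv_cancel₀ (ne_of_gt hyn), one_smul]
    have hdty : dt (β o) y = ‖y‖ * dt (β o) u := by
      conv_lhs => rw [hyu]
      rw [dt_smul_right]
    have h1 : dt (β o) y ≤ 1 := hy o
    have : ‖y‖ * δ ≤ 1 := by
      calc ‖y‖ * δ ≤ ‖y‖ * dt (β o) u := by nlinarith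
        _ = dt (β o) y := hdty.symm
        _ ≤ 1 := h1
    have hinv : (0:ℝ) < δ⁻¹ := inv_pos.mpr hδpos
    nlinarith [mul_inv_cancel₀ (ne_of_gt hδpos)]

-- appended to main namespace later
lemma crux (hd : 0 < d) (P : Set (Fin d → ℝ))
    (hP : ∃ (m : ℕ) (a : Fin m → Fin d → ℝ) (b : Fin m → ℝ),
      P = {x | ∀ i, ∑ j, a i j * x j ≤ b i})
    (hint : (interior P).Nonempty) :
    ∃ Q : Set (Fin d → ℝ),
      (∃ (m : ℕ) (a : Fin m → Fin d → ℝ) (b : Fin m → ℝ),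
        Q = {x | ∀ i, ∑ j, a i j * x j ≤ b i}) ∧
      IsCompact Q ∧ (interior Q).Nonempty ∧
      (sInf {l : ℕ | ∃ p : Fin l → MvPolynomial (Fin d) ℝ,
          P = {x : Fin d → ℝ | ∀ j, 0 ≤ MvPolynomial.eval x (p j)}})
        ≤ (sInf {l : ℕ | ∃ p : Fin l → MvPolynomial (Fin d) ℝ,
          Q = {x : Fin d → ℝ | ∀ j, 0 ≤ MvPolynomial.eval x (p j)}}) + 1 := by
  classical
  obtain ⟨m, a, b, hPeq⟩ := hP
  obtain ⟨x₀, hx₀⟩ := hint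
  have hx₀P : x₀ ∈ P := interior_subset hx₀
  have hmemP : ∀ x, x ∈ P ↔ ∀ i, dt (a i) x ≤ b i := by
    intro x; rw [hPeq]; rfl
  set b' : Fin m → ℝ := fun i => b i - dt (a i) x₀ with hb'
  -- degenerate constraints
  have key0 : ∀ i, b' i ≤ 0 → a i = 0 := by
    intro i hbi
    obtain ⟨ε, hε, hball⟩ := Metric.mem_nhds_iff.mp (mem_interior_iff_mem_nhds.mp hx₀)
    set s : Fin d → ℝ := fun j => if 0 ≤ a i j then 1 else -1 with hs
    have hsnorm : ‖s‖ ≤ 1 := by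
      rw [pi_norm_le_iff_of_nonneg (by norm_num : (0:ℝ) ≤ 1)]
      intro j
      rw [hs]
      by_cases h : 0 ≤ a i j <;> simp [h]
    have hdts : dt (a i) s = ∑ j, |a i j| := by
      apply Finset.sum_congr rfl
      intro j _
      rw [hs]
      by_cases h : 0 ≤ a i j
      · simp only [if_pos h, mul_one]
        exact (abs_of_nonneg h).symm
      · simp only [if_neg h, mul_neg_one]
        rw [abs_of_neg (not_le.mp h)]
    have hz : x₀ + (ε/2) • s ∈ P := by
      apply hball
      rw [Metric.mem_ball, dist_eq_norm]
      have : x₀ + (ε/2) • s - x₀ = (ε/2) • s := by abel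
      rw [this, norm_smul]
      rw [Real.norm_eq_abs, abs_of_pos (by linarith)]
      nlinarith [norm_nonneg s]
    have := (hmemP _).mp hz i
    rw [dt_add_right, dt_smul_right, hdts] at this
    have hbi' : b i - dt (a i) x₀ ≤ 0 := hbi
    have hsum : ∑ j, |a i j| ≤ 0 := by nlinarith
    have hzero : ∀ j, |a i j| = 0 := by
      intro j
      have hnn : ∀ j ∈ Finset.univ, (0:ℝ) ≤ |a i j| := fun j _ => abs_nonneg _
      have := (Finset.sum_eq_zero_iff_of_nonneg hnn).mp (le_antisymm hsum (Finset.sum_nonneg hnn))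
      exact this j (Finset.mem_univ j)
    funext j
    exact abs_eq_zero.mp (hzero j)
  have key1 : ∀ i, a i = 0 → 0 ≤ b' i := by
    intro i hai
    have := (hmemP _).mp hx₀P i
    rw [hb']
    simp only [hai] at this ⊢
    rw [dt_zero_left] at this ⊢
    linarith [this]
  set a' : Fin m → Fin d → ℝ := fun i => if 0 < b' i then (b' i)⁻¹ • a i else 0 with ha'
  have hnorm : ∀ i z, (dt (a i) z ≤ b' i ↔ dt (a' i) z ≤ 1) := by
    intro i z
    rw [ha']
    by_cases h : 0 < b' i
    · simp only [if_pos h]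
      rw [dt_smul_left]
      constructor
      · intro hh
        rw [inv_mul_le_iff₀ h]
        linarith
      · intro hh
        rw [inv_mul_le_iff₀ h] at hh
        linarith
    · have hale : a i = 0 := key0 i (not_lt.mp h)
      have hble : 0 ≤ b' i := key1 i hale
      have hbe : b' i = 0 := le_antisymm (not_lt.mp h) hble
      simp only [if_neg h]
      rw [hale, dt_zero_left, hbe]
      norm_num
  obtain ⟨t, f, π, hπ1, hπ2, hπ3⟩ := exists_proj a'
  -- the combined family
  set ι : Type := Sum (Fin m) (Sum (Fin t) (Fin t)) with hι
  set α : ι → (Fin d → ℝ) := Sum.elim a' (Sum.elim f (fun j => -f j)) with hα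
  set cN : ℝ := 2 * ((Fintype.card ι : ℝ) + 1) with hcN
  have hcNpos : 0 < cN := by positivity
  set c : Fin d → ℝ := (-cN⁻¹) • (∑ k, α k) with hc
  have hdtc : ∀ z, dt c z = (-cN⁻¹) * ∑ k, dt (α k) z := by
    intro z
    rw [hc, dt_smul_left, dt_sum_left]
  have hcP₂ : ∀ z, (∀ k, dt (α k) z ≤ 1) → -2⁻¹ ≤ dt c z := by
    intro z hz
    rw [hdtc]
    have hsum : ∑ k, dt (α k) z ≤ (Fintype.card ι : ℝ) := by
      calc ∑ k, dt (α k) z ≤ ∑ _k : ι, (1:ℝ) := Finset.sum_le_sum (fun k _ => hz k)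
        _ = (Fintype.card ι : ℝ) := by simp
    have hinv : (0:ℝ) < cN⁻¹ := inv_pos.mpr hcNpos
    have hmul : cN⁻¹ * cN = 1 := inv_mul_cancel₀ (ne_of_gt hcNpos)
    have hmul2 : cN⁻¹ * (2 * ((Fintype.card ι : ℝ) + 1)) = 1 := by rw [← hcN]; exact hmul
    have h2 : cN⁻¹ * (∑ k, dt (α k) z) ≤ cN⁻¹ * (Fintype.card ι : ℝ) :=
      mul_le_mul_of_nonneg_left hsum (le_of_lt hinv)
    nlinarith [h2, hmul2, hinv]
  have hcpos : ∀ u, (∀ k, dt (α k) u ≤ 0) → dt c u ≤ 0 → u = 0 := by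
    intro u hu hcu
    rw [hdtc] at hcu
    have hsumle : ∑ k, dt (α k) u ≤ 0 := Finset.sum_nonpos (fun k _ => hu k)
    have hsumz : ∑ k, dt (α k) u = 0 := by
      rcases lt_or_eq_of_le hsumle with h | h
      · exfalso
        have : 0 < (-cN⁻¹) * ∑ k, dt (α k) u := by
          apply mul_pos_of_neg_of_neg _ h
          simp [inv_pos.mpr hcNpos]
        linarith
      · exact h
    have heach : ∀ k : ι, dt (α k) u = 0 := by
      intro k
      have := (Finset.sum_eq_zero_iff_of_nonpos (fun k _ => hu k)).mp hsumz
      exact this k (Finset.mem_univ k)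
    apply hπ3 u
    · intro i; exact heach (Sum.inl i)
    · intro j; exact heach (Sum.inr (Sum.inl j))
  set β : Option ι → (Fin d → ℝ) := fun o => Option.elim o c (fun k => α k + c) with hβ
  have hrecQ : ∀ u : Fin d → ℝ, (∀ o, dt (β o) u ≤ 0) → u = 0 := by
    intro u hu
    have hcu : dt c u ≤ 0 := hu none
    have hku : ∀ k, dt (α k) u + dt c u ≤ 0 := by
      intro k
      have h2 : dt (α k + c) u ≤ 0 := hu (some k)
      rwa [dt_add_left] at h2
    rcases lt_or_eq_of_le hcu with hlt | heq
    · exfalso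
      set r : Fin d → ℝ := (-(dt c u))⁻¹ • u with hr
      have hpos : 0 < -(dt c u) := by linarith
      have hrk : ∀ k, dt (α k) r ≤ 1 := by
        intro k
        rw [hr, dt_smul_right]
        rw [inv_mul_le_iff₀ hpos]
        have := hku k
        linarith
      have := hcP₂ r hrk
      rw [hr, dt_smul_right] at this
      rw [inv_mul_eq_div] at this
      rw [le_div_iff₀ hpos] at this
      nlinarith
    · apply hcpos u _ hcu
      intro k
      have := hku k
      linarith [heq]
  set Q : Set (Fin d → ℝ) := {y | ∀ o, dt (β o) y ≤ 1} with hQ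
  have hQcomp : IsCompact Q := isCompact_of_posdir hd β hrecQ
  have hQpoly : ∃ (m' : ℕ) (a2 : Fin m' → Fin d → ℝ) (b2 : Fin m' → ℝ),
      Q = {x | ∀ i, ∑ j, a2 i j * x j ≤ b2 i} := by
    obtain ⟨m', a2, b2, h⟩ := isPolyhedron_linear β (fun _ => 1)
    exact ⟨m', a2, b2, h⟩
  have hQint : (interior Q).Nonempty := by
    have hU : IsOpen {y : Fin d → ℝ | ∀ o, dt (β o) y < 1} := by
      have : {y : Fin d → ℝ | ∀ o, dt (β o) y < 1} = ⋂ o, {y | dt (β o) y < 1} := by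
        ext y; simp
      rw [this]
      exact isOpen_iInter_of_finite fun o => isOpen_lt (continuous_dt _) continuous_const
    have hsub : {y : Fin d → ℝ | ∀ o, dt (β o) y < 1} ⊆ interior Q :=
      interior_maximal (fun y hy o => le_of_lt (hy o)) hU
    refine ⟨0, hsub ?_⟩
    intro o
    show dt (β o) 0 < 1
    rw [dt_zero_right]; norm_num
  refine ⟨Q, hQpoly, hQcomp, hQint, ?_⟩
  have hQne : {l : ℕ | ∃ p : Fin l → MvPolynomial (Fin d) ℝ,
      Q = {x : Fin d → ℝ | ∀ j, 0 ≤ MvPolynomial.eval x (p j)}}.Nonempty :=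
    ⟨Fintype.card (Option ι), card_mem_repset β (fun _ => 1)⟩
  obtain ⟨q, hq⟩ := Nat.sInf_mem hQne
  choose hp hhp using fun j => homog c (q j)
  have hπlin : ∀ (z : Fin d → ℝ) (k : Fin d), π z k = ∑ l, z l * π (Pi.single l 1) k := by
    intro z k
    have hz : z = ∑ l, z l • (Pi.single l 1 : Fin d → ℝ) := by
      funext j
      rw [Finset.sum_apply]
      simp [Pi.single_apply]
    conv_lhs => rw [hz]
    rw [map_sum, Finset.sum_apply]
    apply Finset.sum_congr rfl
    intro l _
    rw [map_smul]
    simp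
  set Sub : Fin d → MvPolynomial (Fin d) ℝ :=
    fun k => ∑ l, C (π (Pi.single l 1) k) * (X l - C (x₀ l)) with hSubdef
  have hSub : ∀ (x : Fin d → ℝ) (k : Fin d), eval x (Sub k) = π (x - x₀) k := by
    intro x k
    rw [hπlin (x - x₀) k, hSubdef]
    simp only [map_sum, eval_mul, eval_C, map_sub, eval_X, Pi.sub_apply]
    exact Finset.sum_congr rfl fun l _ => by ring
  have hbind : ∀ (x : Fin d → ℝ) (h : MvPolynomial (Fin d) ℝ),
      eval x (bind₁ Sub h) = eval (fun k => eval x (Sub k)) h := fun x h =>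
    eval₂Hom_bind₁ (RingHom.id ℝ) x Sub h
  have hchain : ∀ x : Fin d → ℝ, x ∈ P ↔ ∀ k : ι, dt (α k) (π (x - x₀)) ≤ 1 := by
    intro x
    rw [hmemP]
    constructor
    · intro h k
      match k with
      | Sum.inl i =>
        have h1 : dt (a i) (x - x₀) ≤ b' i := by
          rw [dt_sub_right]
          have h2 := h i
          have : dt (a i) x - dt (a i) x₀ ≤ b i - dt (a i) x₀ := by linarith
          exact this
        show dt (a' i) (π (x - x₀)) ≤ 1
        rw [hπ1]
        exact (hnorm i _).mp h1
      | Sum.inr (Sum.inl j) =>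
        show dt (f j) (π (x - x₀)) ≤ 1
        rw [hπ2]; norm_num
      | Sum.inr (Sum.inr j) =>
        show dt (-f j) (π (x - x₀)) ≤ 1
        rw [dt_neg_left, hπ2]; norm_num
    · intro h i
      have h1 : dt (a' i) (π (x - x₀)) ≤ 1 := h (Sum.inl i)
      rw [hπ1] at h1
      have h2 : dt (a i) (x - x₀) ≤ b' i := (hnorm i _).mpr h1
      rw [dt_sub_right] at h2
      have h3 : dt (a i) x - dt (a i) x₀ ≤ b i - dt (a i) x₀ := h2
      linarith
  apply Nat.sInf_le
  refine ⟨Fin.cons (C (2⁻¹ : ℝ) + ∑ l, C (c l) * Sub l) (fun j => bind₁ Sub (hp j)), ?_⟩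
  ext x
  simp only [Set.mem_setOf_eq]
  set z : Fin d → ℝ := π (x - x₀) with hzdef
  have hfun : (fun k => eval x (Sub k)) = z := funext fun k => hSub x k
  have hexval : eval x (C (2⁻¹ : ℝ) + ∑ l, C (c l) * Sub l) = 2⁻¹ + dt c z := by
    simp only [map_add, eval_C, map_sum, eval_mul]
    congr 1
    rw [dt]
    apply Finset.sum_congr rfl
    intro l _
    rw [hSub]
  constructor
  · intro hxP
    have hk : ∀ k : ι, dt (α k) z ≤ 1 := (hchain x).mp hxP
    have hω : 0 < 1 + dt c z := by
      have := hcP₂ z hk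
      linarith
    intro j
    refine Fin.cases ?_ ?_ j
    · rw [Fin.cons_zero, hexval]
      have := hcP₂ z hk
      linarith
    · intro j'
      rw [Fin.cons_succ, hbind, hfun, hhp j' z hω]
      have hτQ : ((1 + dt c z)⁻¹ • z) ∈ Q := by
        intro o
        have hβo : dt (β o) ((1 + dt c z)⁻¹ • z) = (1 + dt c z)⁻¹ * dt (β o) z :=
          dt_smul_right _ _ _
        rw [hβo, inv_mul_le_iff₀ hω]
        cases o with
        | none =>
          have : dt c z ≤ (1 + dt c z) * 1 := by linarith
          exact this
        | some k =>
          have h5 : dt (α k + c) z ≤ (1 + dt c z) * 1 := by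
            rw [dt_add_left]
            have := hk k
            linarith
          exact h5
      rw [hq] at hτQ
      exact mul_nonneg (pow_nonneg (le_of_lt hω) _) (hτQ j')
  · intro hall
    have h0 := hall 0
    rw [Fin.cons_zero, hexval] at h0
    have hω : 0 < 1 + dt c z := by linarith
    have hqj : ∀ j', 0 ≤ eval ((1 + dt c z)⁻¹ • z) (q j') := by
      intro j'
      have h6 := hall j'.succ
      rw [Fin.cons_succ, hbind, hfun, hhp j' z hω] at h6
      by_contra hneg
      push_neg at hneg
      nlinarith [pow_pos hω ((q j').totalDegree)]
    have hτQ : ((1 + dt c z)⁻¹ • z) ∈ Q := by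
      rw [hq]
      exact fun j' => hqj j'
    have hk : ∀ k : ι, dt (α k) z ≤ 1 := by
      intro k
      have h8 : dt (α k + c) ((1 + dt c z)⁻¹ • z) ≤ 1 := hτQ (some k)
      rw [dt_smul_right, dt_add_left, inv_mul_le_iff₀ hω] at h8
      linarith
    exact (hchain x).mpr hk

end MPaux

/-- `P` is a polyhedron: an intersection of finitely many closed halfspaces. -/
def IsPolyhedron {d : ℕ} (P : Set (Fin d → ℝ)) : Prop :=
  ∃ (m : ℕ) (a : Fin m → Fin d → ℝ) (b : Fin m → ℝ),
    P = {x | ∀ i, ∑ j, a i j * x j ≤ b i}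

/-- `m_P(d)`: maximum of `m_P(P)` over all full-dimensional polytopes `P ⊂ ℝ^d`. -/
noncomputable def mPmaxPolytope (d : ℕ) : ℕ :=
  sSup {n : ℕ | ∃ P : Set (Fin d → ℝ),
    IsPolyhedron P ∧ IsCompact P ∧ (interior P).Nonempty ∧ mP d P = n}

/-- `m̄_P(d)`: maximum of `m_P(P)` over all full-dimensional polyhedra `P ⊂ ℝ^d`. -/
noncomputable def mPmaxPolyhedron (d : ℕ) : ℕ :=
  sSup {n : ℕ | ∃ P : Set (Fin d → ℝ),
    IsPolyhedron P ∧ (interior P).Nonempty ∧ mP d P = n}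

/-- For `d ≥ 2`, `m̄_P(d) ≤ m_P(d) + 1`. -/
theorem mPmaxPolyhedron_le (d : ℕ) (hd : 2 ≤ d) :
    mPmaxPolyhedron d ≤ mPmaxPolytope d + 1 := by
  classical
  rw [mPmaxPolyhedron, mPmaxPolytope]
  set S := {n : ℕ | ∃ P : Set (Fin d → ℝ),
    IsPolyhedron P ∧ (interior P).Nonempty ∧ mP d P = n} with hS
  set T := {n : ℕ | ∃ P : Set (Fin d → ℝ),
    IsPolyhedron P ∧ IsCompact P ∧ (interior P).Nonempty ∧ mP d P = n} with hT
  have hTS : T ⊆ S := by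
    rintro n ⟨P, h1, h2, h3, h4⟩
    exact ⟨P, h1, h3, h4⟩
  by_cases hbdd : BddAbove S
  · have hSne : S.Nonempty := by
      refine ⟨mP d Set.univ, Set.univ, ?_, ?_, rfl⟩
      · exact ⟨0, Fin.elim0, Fin.elim0, by ext x; simp⟩
      · rw [interior_univ]
        exact Set.univ_nonempty
    apply csSup_le hSne
    rintro n ⟨P, hP1, hP2, rfl⟩
    obtain ⟨Q, hQ1, hQ2, hQ3, hQle⟩ := MPaux.crux (by omega : 0 < d) P hP1 hP2
    have hmem : mP d Q ∈ T := ⟨Q, hQ1, hQ2, hQ3, rfl⟩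
    have hle : mP d Q ≤ sSup T := le_csSup (hbdd.mono hTS) hmem
    have h2 : mP d P ≤ mP d Q + 1 := hQle
    exact le_trans h2 (Nat.add_le_add_right hle 1)
  · rw [csSup_of_not_bddAbove hbdd, csSup_empty]
    exact bot_le
end

section
/- Let P ⊂ ℝ^d be a pointed d-polyhedron with vertex at the origin, and let c ∈ ℝ^d satisfy ⟨c,x⟩ > 0 for all x ∈ P \ {0}. Suppose the projective image f(P) with f(x) = x/(⟨c,x⟩+1) satisfies f(P) = {x : p_i(x) ≥ 0 for i ∈ I, ⟨c,x⟩ < 1}. Then there exist polynomials p̃_i (obtained by multiplying p_i(f(x)) by suitable powers of ⟨c,x⟩+1) such that P = {x ∈ ℝ^d : p̃_i(x) ≥ 0 for i ∈ I, ⟨c,x⟩ ≥ 0}. In particular m_P(P) ≤ |I| + 1. -/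
/-- Let `P ⊂ ℝ^d` be a pointed polyhedron with a vertex at the origin and
`⟨c,x⟩ > 0` on `P \ {0}`.  If the image of `P` under the projective map
`f(x) = x/(⟨c,x⟩+1)` is `{x : pᵢ(x) ≥ 0 (i ∈ I), ⟨c,x⟩ < 1}`, then there are
polynomials `p̃ᵢ`, obtained by multiplying `pᵢ(f(x))` by suitable powers of
`⟨c,x⟩+1`, with `P = {x : p̃ᵢ(x) ≥ 0 (i ∈ I), ⟨c,x⟩ ≥ 0}`.
In particular `m_P(P) ≤ |I| + 1`. -/
theorem projective_representation (d : ℕ) (ι : Type) [Fintype ι]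
    (P : Set (Fin d → ℝ))
    (hpoly : ∃ (m : ℕ) (a : Fin m → Fin d → ℝ) (b : Fin m → ℝ),
      P = {x | ∀ i, ∑ j, a i j * x j ≤ b i})
    (hfull : (interior P).Nonempty)
    (h0 : (0 : Fin d → ℝ) ∈ P)
    (h0vert : (0 : Fin d → ℝ) ∈ Set.extremePoints ℝ P)
    (c : Fin d → ℝ)
    (hc : ∀ x ∈ P, x ≠ 0 → 0 < ∑ j, c j * x j)
    (f : (Fin d → ℝ) → (Fin d → ℝ))
    (hf : ∀ x, f x = ((∑ j, c j * x j) + 1)⁻¹ • x)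
    (p : ι → MvPolynomial (Fin d) ℝ)
    (hfP : f '' P = {x | (∀ i, 0 ≤ MvPolynomial.eval x (p i)) ∧ ∑ j, c j * x j < 1}) :
    (∃ (pt : ι → MvPolynomial (Fin d) ℝ) (k : ι → ℕ),
      (∀ i, ∀ x : Fin d → ℝ, 0 < (∑ j, c j * x j) + 1 →
        MvPolynomial.eval x (pt i) =
          ((∑ j, c j * x j) + 1) ^ k i * MvPolynomial.eval (f x) (p i)) ∧
      P = {x | (∀ i, 0 ≤ MvPolynomial.eval x (pt i)) ∧ 0 ≤ ∑ j, c j * x j}) ∧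
    mP d P ≤ Fintype.card ι + 1 := by
  classical
  set S : (Fin d → ℝ) → ℝ := fun x => ∑ j, c j * x j with hS
  have hSP : ∀ x ∈ P, 0 ≤ S x := by
    intro x hx
    by_cases h : x = 0
    · subst h; simp [hS]
    · exact (hc x hx h).le
  have ht : ∀ x ∈ P, 0 < S x + 1 := fun x hx => by linarith [hSP x hx]
  set L : MvPolynomial (Fin d) ℝ :=
      (∑ j, MvPolynomial.C (c j) * MvPolynomial.X j) + 1 with hLdef
  have hLe : ∀ x, MvPolynomial.eval x L = S x + 1 := by
    intro x; simp [hLdef, hS]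
  set k : ι → ℕ := fun i => (p i).totalDegree with hk
  set pt : ι → MvPolynomial (Fin d) ℝ := fun i =>
    ∑ m ∈ (p i).support, MvPolynomial.monomial m ((p i).coeff m) *
      L ^ (k i - m.sum fun _ e => e) with hptdef
  -- value of S on f x
  have hSf : ∀ x, S (f x) = (S x + 1)⁻¹ * S x := by
    intro x
    rw [hf]
    simp only [hS, Pi.smul_apply, smul_eq_mul, Finset.mul_sum]
    exact Finset.sum_congr rfl fun j _ => by ring
  -- the key evaluation identity
  have key : ∀ i (x : Fin d → ℝ), 0 < S x + 1 →
      MvPolynomial.eval x (pt i) = (S x + 1) ^ k i * MvPolynomial.eval (f x) (p i) := by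
    intro i x hx
    have hne : S x + 1 ≠ 0 := ne_of_gt hx
    simp only [hptdef]
    conv_rhs => rw [MvPolynomial.eval_eq]
    simp only [map_sum, MvPolynomial.eval_mul, MvPolynomial.eval_monomial, map_pow, hLe]
    rw [Finset.mul_sum]
    apply Finset.sum_congr rfl
    intro m hm
    have hdeg : (m.sum fun _ e => e) ≤ k i := MvPolynomial.le_totalDegree hm
    have hfx : ∀ j, f x j = (S x + 1)⁻¹ * x j := by
      intro j; rw [hf]; simp [hS]
    have hprod : ∏ j ∈ m.support, f x j ^ m j
        = ((S x + 1)⁻¹) ^ (m.sum fun _ e => e) * ∏ j ∈ m.support, x j ^ m j := by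
      rw [Finsupp.sum, ← Finset.prod_pow_eq_pow_sum, ← Finset.prod_mul_distrib]
      exact Finset.prod_congr rfl fun j _ => by rw [hfx j, mul_pow]
    rw [hprod, pow_sub₀ _ hne hdeg, inv_pow]
    have h1 : (S x + 1) ^ (m.sum fun _ e => e) ≠ 0 := pow_ne_zero _ hne
    rw [Finsupp.prod]
    field_simp
  -- set equality
  have hset : P = {x | (∀ i, 0 ≤ MvPolynomial.eval x (pt i)) ∧ 0 ≤ S x} := by
    ext x
    constructor
    · intro hx
      have hxt := ht x hx
      have hfx : f x ∈ f '' P := Set.mem_image_of_mem f hx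
      rw [hfP] at hfx
      refine ⟨fun i => ?_, hSP x hx⟩
      rw [key i x hxt]
      exact mul_nonneg (pow_nonneg hxt.le _) (hfx.1 i)
    · rintro ⟨hpt, hSx⟩
      have hxt : 0 < S x + 1 := by linarith
      have hmem : f x ∈ {y | (∀ i, 0 ≤ MvPolynomial.eval y (p i)) ∧ S y < 1} := by
        constructor
        · intro i
          have := key i x hxt
          have hpow : 0 < (S x + 1) ^ k i := pow_pos hxt _
          nlinarith [hpt i, hpow, this]
        · rw [hSf x]
          rw [inv_mul_lt_iff₀ hxt]
          linarith
      rw [← hfP] at hmem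
      obtain ⟨y, hyP, hyx⟩ := hmem
      have hyt : 0 < S y + 1 := ht y hyP
      have hSeq : S y = S x := by
        have h1 : S (f y) = S (f x) := by rw [hyx]
        rw [hSf, hSf] at h1
        have hyne : S y + 1 ≠ 0 := ne_of_gt hyt
        have hxne : S x + 1 ≠ 0 := ne_of_gt hxt
        field_simp at h1
        nlinarith [h1]
      have hxy : x = y := by
        have hx1 : x = (S x + 1) • f x := by
          rw [hf x, smul_smul, mul_inv_cancel₀ (ne_of_gt hxt), one_smul]
        have hy1 : y = (S y + 1) • f y := by
          rw [hf y, smul_smul, mul_inv_cancel₀ (ne_of_gt hyt), one_smul]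
        rw [hx1, hy1, hyx, hSeq]
      rw [hxy]; exact hyP
  refine ⟨⟨pt, k, key, hset⟩, ?_⟩
  -- the mP bound
  set q : Fin (Fintype.card ι + 1) → MvPolynomial (Fin d) ℝ := fun j =>
    if h : (j : ℕ) < Fintype.card ι then pt ((Fintype.equivFin ι).symm ⟨j, h⟩)
    else L - 1 with hq
  have hLe' : ∀ x, MvPolynomial.eval x (L - 1) = S x := by
    intro x; rw [map_sub, hLe]; simp
  have hPq : P = {x : Fin d → ℝ | ∀ j, 0 ≤ MvPolynomial.eval x (q j)} := by
    rw [hset]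
    ext x
    simp only [Set.mem_setOf_eq]
    constructor
    · rintro ⟨h1, h2⟩ j
      rw [hq]
      by_cases h : (j : ℕ) < Fintype.card ι
      · simp only [dif_pos h]; exact h1 _
      · simp only [dif_neg h]; rw [hLe']; exact h2
    · intro h
      constructor
      · intro i
        have := h ⟨(Fintype.equivFin ι i : ℕ),
          Nat.lt_succ_of_lt (Fintype.equivFin ι i).isLt⟩
        rw [hq] at this
        simp only [dif_pos (Fintype.equivFin ι i).isLt] at this
        simpa using this
      · have := h ⟨Fintype.card ι, Nat.lt_succ_self _⟩
        rw [hq] at this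
        simp only [dif_neg (lt_irrefl (Fintype.card ι))] at this
        rw [hLe'] at this
        exact this
  exact Nat.sInf_le ⟨q, hPq⟩
end
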